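/- arXiv:1312.0542 — 6 statements merged into one kernel-verified Lean document; each statement's English description precedes it below -/
import Mathlib

section
/- Let G be a simple graph on a finite vertex set with at least 3 vertices, and let v and w be distinct vertices of G with the same neighborhood. Then G is connected if and only if the induced subgraph G − v on the remaining vertices is connected. -/
/-- If `G` is a simple graph on at least 3 vertices and `v ≠ w` are duplicate
vertices (same neighborhood), then `G` is connected iff `G - v` is connected. -/
theorem connected_iff_deleteDuplicate_connected {V : Type*} [Fintype V]
    (G : SimpleGraph V) (hcard : 3 ≤ Fintype.card V) (v w : V) (hvw : v ≠ w)
    (hdup : G.neighborSet v = G.neighborSet w) :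
    G.Connected ↔ (G.induce {u : V | u ≠ v}).Connected := by
  classical
  have hadjw : ∀ {b}, G.Adj v b → G.Adj w b := by
    intro b hb
    have : b ∈ G.neighborSet v := hb
    rw [hdup] at this; exact this
  have hadjv : ∀ {b}, G.Adj w b → G.Adj v b := by
    intro b hb
    have : b ∈ G.neighborSet w := hb
    rw [← hdup] at this; exact this
  have hnadj : ¬ G.Adj v w := fun h => G.irrefl (hadjw h)
  constructor
  · rintro ⟨hpre, -⟩
    let fd : V → {u : V | u ≠ v} := fun x => if h : x = v then ⟨w, hvw.symm⟩ else ⟨x, h⟩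
    have hmap : ∀ ⦃a b⦄, G.Adj a b → (G.induce {u : V | u ≠ v}).Adj (fd a) (fd b) := by
      intro a b hab
      simp only [SimpleGraph.comap_adj, Function.Embedding.coe_subtype, fd]
      split_ifs with ha hb hb
      · subst ha; subst hb; exact absurd hab (G.irrefl)
      · subst ha; exact hadjw hab
      · subst hb; exact (hadjw hab.symm).symm
      · exact hab
    let f : G →g (G.induce {u : V | u ≠ v}) := ⟨fd, fun h => hmap h⟩
    have hf : ∀ (a : V) (h : a ≠ v), f a = ⟨a, h⟩ := by
      intro a h
      exact dif_neg h
    have : Nonempty {u : V | u ≠ v} := ⟨⟨w, hvw.symm⟩⟩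
    refine ⟨fun a b => ?_⟩
    have hr := (hpre a b).map f
    rwa [hf a a.2, hf b b.2, Subtype.coe_eta, Subtype.coe_eta] at hr
  · rintro ⟨hpre, -⟩
    let ι := SimpleGraph.Embedding.induce ({u : V | u ≠ v} : Set V) (G := G)
    obtain ⟨u, huv, huw⟩ : ∃ u, u ≠ v ∧ u ≠ w := by
      by_contra h
      push_neg at h
      have hsub : (Finset.univ : Finset V) ⊆ {v, w} := by
        intro x _
        by_cases hx : x = v
        · simp [hx]
        · simp [h x hx]
      have hle := Finset.card_le_card hsub
      rw [Finset.card_univ] at hle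
      have h2 : ({v, w} : Finset V).card ≤ 2 := Finset.card_insert_le _ _ |>.trans (by simp)
      omega
    obtain ⟨p⟩ := hpre ⟨w, hvw.symm⟩ ⟨u, huv⟩
    have hpnil : ¬ p.Nil := SimpleGraph.Walk.not_nil_of_ne (by simp [huw.symm])
    have hsnd := p.adj_snd hpnil
    set x : {u : V | u ≠ v} := p.getVert 1 with hxdef
    have hwx : G.Adj w ↑x := by simpa using hsnd
    have hxv : (x : V) ≠ v := x.2
    have hvx : G.Adj v ↑x := hadjv hwx
    have reach : ∀ b, b ≠ v → G.Reachable v b := by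
      intro b hb
      have h1 : G.Reachable v ↑x := hvx.reachable
      have h2 : G.Reachable ↑x b := by
        exact (hpre x ⟨b, hb⟩).map ι.toHom
      exact h1.trans h2
    have : Nonempty V := ⟨v⟩
    refine ⟨fun a b => ?_⟩
    by_cases ha : a = v <;> by_cases hb : b = v
    · rw [ha, hb]
    · rw [ha]; exact reach b hb
    · rw [hb]; exact (reach a ha).symm
    · exact ((reach a ha).symm).trans (reach b hb)
end

section
/- Let G be a simple graph, let v and w be distinct vertices of G with the same neighborhood, and let r be a natural number. Then G admits a proper coloring with at most r colors if and only if the induced subgraph G − v admits a proper coloring with at most r colors. -/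
/-- If `v ≠ w` are duplicate vertices of `G` (same neighborhood), then `G` is
properly colorable with at most `r` colors iff `G - v` is. -/
theorem colorable_iff_deleteDuplicate_colorable {V : Type*}
    (G : SimpleGraph V) (v w : V) (hvw : v ≠ w)
    (hdup : G.neighborSet v = G.neighborSet w) (r : ℕ) :
    G.Colorable r ↔ (G.induce {u : V | u ≠ v}).Colorable r := by
  constructor
  · rintro ⟨c⟩
    exact ⟨c.comp (SimpleGraph.Embedding.induce _).toHom⟩
  · rintro ⟨c⟩
    haveI := Classical.decEq V
    refine ⟨SimpleGraph.Coloring.mk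
      (fun u => if h : u = v then c ⟨w, hvw.symm⟩ else c ⟨u, h⟩) ?_⟩
    intro a b hab
    have hvv' : ∀ x, G.Adj v x → G.Adj w x := by
      intro x hx
      have : x ∈ G.neighborSet w := hdup ▸ hx
      exact this
    split_ifs with ha hb hb
    · exact absurd (ha ▸ hb ▸ hab) (G.irrefl)
    · subst ha
      have haw : G.Adj w b := hvv' b hab
      exact c.valid (by simpa using haw)
    · subst hb
      have haw : G.Adj w a := hvv' a hab.symm
      exact fun h => c.valid (by simpa using haw) h.symm
    · exact c.valid (by simpa using hab)
end

section
/- Let G be a connected simple graph on a finite vertex set that is not a tree (i.e., G contains a cycle). Then there exists a unique vertex set S such that (i) every vertex of S has at least two neighbors in S, and (ii) every vertex set T in which every vertex of T has at least two neighbors in T satisfies T ⊆ S. Moreover, S has at least 3 vertices and the induced subgraph of G on S is connected. -/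
open SimpleGraph

private lemma path_interior_two_nbrs {V : Type*} {G : SimpleGraph V} :
    ∀ {u v : V} (p : G.Walk u v), p.IsPath → ∀ {w : V}, w ∈ p.support → w ≠ u → w ≠ v →
      ∃ a b, a ≠ b ∧ G.Adj w a ∧ G.Adj w b ∧ a ∈ p.support ∧ b ∈ p.support := by
  intro u v p
  induction p with
  | nil => intro _ w hw hwu _; simp at hw; exact absurd hw hwu
  | @cons u x v h q ih =>
    intro hp w hw hwu hwv
    have hq : q.IsPath := hp.of_cons
    rw [SimpleGraph.Walk.support_cons, List.mem_cons] at hw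
    rcases hw with rfl | hwq
    · exact absurd rfl hwu
    by_cases hwx : w = x
    · subst hwx
      -- w = x : neighbors are u and the second vertex of q
      cases q with
      | nil => exact absurd rfl hwv
      | @cons x y v h' r =>
        refine ⟨u, y, ?_, h.symm, h', by simp, ?_⟩
        · rintro rfl
          exact ((SimpleGraph.Walk.cons_isPath_iff _ _).mp hp).2 (by simp)
        · simp
    · obtain ⟨a, b, hab, ha, hb, has, hbs⟩ := ih hq hwq hwx hwv
      exact ⟨a, b, hab, ha, hb, by simp [has], by simp [hbs]⟩

private lemma cycle_start_two_nbrs {V : Type*} {G : SimpleGraph V} {w : V} (c : G.Walk w w)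
    (hc : c.IsCycle) :
    ∃ a b, a ≠ b ∧ G.Adj w a ∧ G.Adj w b ∧ a ∈ c.support ∧ b ∈ c.support := by
  cases c with
  | nil => exact absurd rfl hc.ne_nil
  | @cons w x w h q =>
    obtain ⟨hq, he⟩ := (SimpleGraph.Walk.cons_isCycle_iff q h).mp hc
    have hnil : ¬ q.reverse.Nil := by
      rw [SimpleGraph.Walk.nil_iff_length_eq, SimpleGraph.Walk.length_reverse]
      intro h0
      have := hq.isTrail
      exact h.ne (by simpa using (SimpleGraph.Walk.nil_iff_length_eq.mpr h0 :
        q.Nil).eq.symm)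
    obtain ⟨y, h2, r, hpr⟩ := (SimpleGraph.Walk.not_nil_iff).mp hnil
    refine ⟨x, y, ?_, h, h2, by simp, ?_⟩
    · rintro rfl
      apply he
      have : s(w, x) ∈ q.reverse.edges := by rw [hpr]; simp
      rwa [SimpleGraph.Walk.edges_reverse, List.mem_reverse] at this
    · have : y ∈ q.reverse.support := by rw [hpr]; simp
      rw [SimpleGraph.Walk.support_reverse, List.mem_reverse] at this
      simp [this]

private lemma cycle_two_nbrs {V : Type*} {G : SimpleGraph V} {u : V} (c : G.Walk u u)
    (hc : c.IsCycle) {w : V} (hw : w ∈ c.support) :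
    ∃ a b, a ≠ b ∧ G.Adj w a ∧ G.Adj w b ∧ a ∈ c.support ∧ b ∈ c.support := by
  classical
  obtain ⟨a, b, hab, ha, hb, has, hbs⟩ := cycle_start_two_nbrs (c.rotate w hw) (hc.rotate hw)
  have hsub : ∀ z, z ∈ (c.rotate w hw).support → z ∈ c.support := by
    intro z hz
    rw [SimpleGraph.Walk.mem_support_iff] at hz
    rcases hz with rfl | hz
    · exact hw
    · have := (SimpleGraph.Walk.support_rotate c w hw).mem_iff.mp hz
      exact List.mem_of_mem_tail this
  exact ⟨a, b, hab, ha, hb, hsub a has, hsub b hbs⟩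

/-- A connected simple graph `G` on a finite vertex set that is not a tree
(i.e. contains a cycle) has a unique core: a unique vertex set `S` such that
every vertex of `S` has at least two neighbors in `S`, and `S` contains every
vertex set `T` in which every vertex has at least two neighbors in `T`.
Moreover this core has at least 3 vertices and induces a connected subgraph. -/
theorem core_exists_unique {V : Type*} [Fintype V] (G : SimpleGraph V)
    (hconn : G.Connected) (hcyc : ¬ G.IsAcyclic) :
    ∃ S : Set V,
      ((∀ v ∈ S, 2 ≤ (S ∩ G.neighborSet v).ncard) ∧
        (∀ T : Set V, (∀ v ∈ T, 2 ≤ (T ∩ G.neighborSet v).ncard) → T ⊆ S)) ∧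
      (∀ S' : Set V,
        ((∀ v ∈ S', 2 ≤ (S' ∩ G.neighborSet v).ncard) ∧
          (∀ T : Set V, (∀ v ∈ T, 2 ≤ (T ∩ G.neighborSet v).ncard) → T ⊆ S')) →
        S' = S) ∧
      3 ≤ S.ncard ∧ (G.induce S).Connected := by
  classical
  obtain ⟨u, c, hc⟩ : ∃ (u : V) (c : G.Walk u u), c.IsCycle := by
    by_contra h
    push_neg at h
    exact hcyc fun v c hc => h v c hc
  set S : Set V := ⋃₀ {T | ∀ v ∈ T, 2 ≤ (T ∩ G.neighborSet v).ncard} with hSdef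
  have hmax : ∀ T : Set V, (∀ v ∈ T, 2 ≤ (T ∩ G.neighborSet v).ncard) → T ⊆ S :=
    fun T hT => Set.subset_sUnion_of_mem hT
  have hSdeg : ∀ v ∈ S, 2 ≤ (S ∩ G.neighborSet v).ncard := by
    rintro v ⟨T, hT, hvT⟩
    calc 2 ≤ (T ∩ G.neighborSet v).ncard := hT v hvT
      _ ≤ (S ∩ G.neighborSet v).ncard :=
        Set.ncard_le_ncard (Set.inter_subset_inter_left _ (hmax T hT)) (Set.toFinite _)
  -- the cycle support is such a T
  have hTC : ∀ v ∈ {a | a ∈ c.support}, 2 ≤ ({a | a ∈ c.support} ∩ G.neighborSet v).ncard := by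
    intro v hv
    obtain ⟨a, b, hab, ha, hb, has, hbs⟩ := cycle_two_nbrs c hc hv
    rw [show (2 : ℕ) = 1 + 1 from rfl, Nat.add_one_le_iff]
    exact (Set.one_lt_ncard (Set.toFinite _)).mpr ⟨a, ⟨has, ha⟩, b, ⟨hbs, hb⟩, hab⟩
  have huS : u ∈ S := hmax _ hTC c.start_mem_support
  -- 3 ≤ ncard
  have h3 : 3 ≤ S.ncard := by
    have h2 := hSdeg u huS
    rw [show (2 : ℕ) = 1 + 1 from rfl, Nat.add_one_le_iff,
      Set.one_lt_ncard (Set.toFinite _)] at h2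
    obtain ⟨a, ⟨haS, haN⟩, b, ⟨hbS, hbN⟩, hab⟩ := h2
    have hau : a ≠ u := fun h => G.irrefl (h ▸ haN)
    have hbu : b ≠ u := fun h => G.irrefl (h ▸ hbN)
    have : ({u, a, b} : Set V).ncard = 3 :=
      Set.ncard_eq_three.mpr ⟨u, a, b, hau.symm, hbu.symm, hab, rfl⟩
    calc 3 = ({u, a, b} : Set V).ncard := this.symm
      _ ≤ S.ncard := Set.ncard_le_ncard (by
          intro z hz
          rcases hz with rfl | rfl | rfl
          exacts [huS, haS, hbS]) (Set.toFinite _)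
  -- every path between vertices of S stays in S
  have hsupp : ∀ (x y : V), x ∈ S → y ∈ S → ∀ (p : G.Walk x y), p.IsPath →
      ∀ a ∈ p.support, a ∈ S := by
    intro x y hx hy p hp
    have hT : ∀ v ∈ (S ∪ {a | a ∈ p.support}),
        2 ≤ ((S ∪ {a | a ∈ p.support}) ∩ G.neighborSet v).ncard := by
      intro v hv
      by_cases hvS : v ∈ S
      · calc 2 ≤ (S ∩ G.neighborSet v).ncard := hSdeg v hvS
          _ ≤ _ := Set.ncard_le_ncard
            (Set.inter_subset_inter_left _ Set.subset_union_left) (Set.toFinite _)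
      · have hvp : v ∈ p.support := hv.resolve_left hvS
        have hvx : v ≠ x := fun h => hvS (h ▸ hx)
        have hvy : v ≠ y := fun h => hvS (h ▸ hy)
        obtain ⟨a, b, hab, ha, hb, has, hbs⟩ := path_interior_two_nbrs p hp hvp hvx hvy
        rw [show (2 : ℕ) = 1 + 1 from rfl, Nat.add_one_le_iff]
        exact (Set.one_lt_ncard (Set.toFinite _)).mpr
          ⟨a, ⟨Or.inr has, ha⟩, b, ⟨Or.inr hbs, hb⟩, hab⟩
    intro a hap
    exact hmax _ hT (Or.inr hap)
  -- reachability inside the induced graph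
  have hreach : ∀ (x y : V) (p : G.Walk x y), (∀ a ∈ p.support, a ∈ S) →
      ∀ (hx : x ∈ S) (hy : y ∈ S), (G.induce S).Reachable ⟨x, hx⟩ ⟨y, hy⟩ := by
    intro x y p
    induction p with
    | nil => intro _ hx hy; exact SimpleGraph.Reachable.refl _
    | @cons x z y h q ih =>
      intro hs hx hy
      have hz : z ∈ S := hs z (by simp)
      have hadj : (G.induce S).Adj ⟨x, hx⟩ ⟨z, hz⟩ := h
      exact hadj.reachable.trans (ih (fun a ha => hs a (by simp [ha])) hz hy)
  refine ⟨S, ⟨hSdeg, hmax⟩, ?_, h3, ?_⟩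
  · intro S' ⟨hS'deg, hS'max⟩
    exact Set.Subset.antisymm (hmax S' hS'deg) (hS'max S hSdeg)
  · rw [SimpleGraph.connected_iff]
    refine ⟨?_, ⟨⟨u, huS⟩⟩⟩
    rintro ⟨x, hx⟩ ⟨y, hy⟩
    obtain ⟨w⟩ := hconn.preconnected x y
    have hp : (w.toPath : G.Walk x y).IsPath := w.toPath.property
    have hss : ∀ a ∈ (w.toPath : G.Walk x y).support, a ∈ S :=
      hsupp x y hx hy _ hp
    exact hreach x y _ hss hx hy
end

section
/- For every finite set V, the map sending a simple graph G with vertex set V to the pair (π_G, Q_G) — where π_G is the partition of V whose blocks are the maximal classes of vertices with equal neighborhoods in G, and Q_G is the quotient graph whose vertices are the blocks of π_G, with two distinct blocks adjacent if and only if some (equivalently, every) pair of representatives is adjacent in G — is a bijection from the set of all simple graphs with vertex set V onto the set of pairs (π, H) where π is a partition of V into nonempty blocks and H is a point-determining simple graph whose vertex set is the set of blocks of π. -/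
/-- The equivalence relation on vertices of `G` given by having equal
neighborhoods.  A setoid on `V` encodes exactly a partition of `V` into
nonempty blocks (its equivalence classes, i.e. the elements of its quotient). -/
def neighborSetoid {V : Type*} (G : SimpleGraph V) : Setoid V :=
  ⟨fun u v => G.neighborSet u = G.neighborSet v,
    ⟨fun _ => rfl, Eq.symm, Eq.trans⟩⟩

/-- The quotient graph of `G` by the same-neighborhood relation: two blocks are
adjacent iff some (equivalently, every) pair of representatives is adjacent
in `G`. -/
def neighborQuotientGraph {V : Type*} (G : SimpleGraph V) :
    SimpleGraph (Quotient (neighborSetoid G)) where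
  Adj a b := ∃ u v : V, a = Quotient.mk (neighborSetoid G) u ∧
      b = Quotient.mk (neighborSetoid G) v ∧ G.Adj u v
  symm := by
    constructor
    rintro a b ⟨u, v, hu, hv, h⟩
    exact ⟨v, u, hv, hu, h.symm⟩
  loopless := by
    constructor
    rintro a ⟨u, v, hu, hv, h⟩
    have hq : G.neighborSet u = G.neighborSet v := Quotient.exact (hu.symm.trans hv)
    have hmem : v ∈ G.neighborSet u := h
    rw [hq] at hmem
    exact G.irrefl hmem

def sigmaAdj {V : Type*} (p : Σ s : Setoid V, SimpleGraph (Quotient s)) (u v : V) : Prop :=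
  p.2.Adj (Quotient.mk p.1 u) (Quotient.mk p.1 v)

lemma quotAdj_iff {V : Type*} (G : SimpleGraph V) (u v : V) :
    (neighborQuotientGraph G).Adj (Quotient.mk (neighborSetoid G) u)
      (Quotient.mk (neighborSetoid G) v) ↔ G.Adj u v := by
  constructor
  · rintro ⟨u', v', hu, hv, h⟩
    have h1 : G.neighborSet u = G.neighborSet u' := Quotient.exact hu
    have h2 : G.neighborSet v = G.neighborSet v' := Quotient.exact hv
    have hv' : v' ∈ G.neighborSet u := by rw [h1]; exact h
    have hu' : u ∈ G.neighborSet v := by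
      rw [h2]; exact (SimpleGraph.mem_neighborSet _ _ _).mpr
        ((SimpleGraph.mem_neighborSet _ _ _).mp hv').symm
    exact ((SimpleGraph.mem_neighborSet _ _ _).mp hu').symm
  · intro h; exact ⟨u, v, rfl, rfl, h⟩

lemma quot_pointDetermining {V : Type*} (G : SimpleGraph V) :
    ∀ a b : Quotient (neighborSetoid G),
      (neighborQuotientGraph G).neighborSet a = (neighborQuotientGraph G).neighborSet b →
        a = b := by
  intro a b
  induction a using Quotient.ind with
  | _ u =>
    induction b using Quotient.ind with
    | _ v =>
      intro hN
      apply Quotient.sound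
      show G.neighborSet u = G.neighborSet v
      have key : ∀ x y : V, G.neighborSet x = G.neighborSet y → ∀ w : V,
          w ∈ G.neighborSet x →
          (Quotient.mk (neighborSetoid G) w ∈
            (neighborQuotientGraph G).neighborSet (Quotient.mk (neighborSetoid G) y)) := by
        intro x y hxy w hw
        exact ⟨y, w, rfl, rfl, by
          have : w ∈ G.neighborSet y := by rw [← hxy]; exact hw
          exact this⟩
      ext w
      constructor
      · intro hw
        have : Quotient.mk (neighborSetoid G) w ∈
            (neighborQuotientGraph G).neighborSet (Quotient.mk (neighborSetoid G) v) := by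
          rw [← hN]; exact key u u rfl w hw
        have := (quotAdj_iff G v w).mp this
        exact this
      · intro hw
        have : Quotient.mk (neighborSetoid G) w ∈
            (neighborQuotientGraph G).neighborSet (Quotient.mk (neighborSetoid G) u) := by
          rw [hN]; exact key v v rfl w hw
        have := (quotAdj_iff G u w).mp this
        exact this

def liftGraph {V : Type*} (s : Setoid V) (H : SimpleGraph (Quotient s)) : SimpleGraph V where
  Adj u v := H.Adj (Quotient.mk s u) (Quotient.mk s v)
  symm := ⟨fun _ _ h => h.symm⟩
  loopless := ⟨fun _ h => H.irrefl h⟩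

lemma sigma_graph_eq {V : Type*} {s₁ s₂ : Setoid V} (g₁ : SimpleGraph (Quotient s₁))
    (g₂ : SimpleGraph (Quotient s₂)) (hs : s₁ = s₂)
    (h : ∀ u v : V, g₁.Adj (Quotient.mk s₁ u) (Quotient.mk s₁ v) ↔
      g₂.Adj (Quotient.mk s₂ u) (Quotient.mk s₂ v)) :
    (⟨s₁, g₁⟩ : Σ s : Setoid V, SimpleGraph (Quotient s)) = ⟨s₂, g₂⟩ := by
  subst hs
  congr 1
  ext a b
  induction a using Quotient.ind with
  | _ u =>
    induction b using Quotient.ind with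
    | _ v => exact h u v

/-- The map sending a simple graph `G` on a finite vertex set `V` to the pair
consisting of the partition of `V` into classes of vertices with equal
neighborhoods (encoded as a setoid) together with the quotient graph on the
blocks, is a bijection onto the set of pairs `(π, H)` where `π` is a partition
of `V` and `H` is a point-determining simple graph on the blocks of `π`. -/
theorem graph_equiv_partition_pointDetermining {V : Type*} [Fintype V] :
    Function.Injective
      (fun G : SimpleGraph V =>
        (⟨neighborSetoid G, neighborQuotientGraph G⟩ :
          Σ s : Setoid V, SimpleGraph (Quotient s))) ∧
    Set.range
      (fun G : SimpleGraph V =>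
        (⟨neighborSetoid G, neighborQuotientGraph G⟩ :
          Σ s : Setoid V, SimpleGraph (Quotient s))) =
      {p : Σ s : Setoid V, SimpleGraph (Quotient s) |
        ∀ a b : Quotient p.1, p.2.neighborSet a = p.2.neighborSet b → a = b} := by
  constructor
  · intro G G' h
    have hadj : ∀ u v : V,
        (sigmaAdj (⟨neighborSetoid G, neighborQuotientGraph G⟩ :
          Σ s : Setoid V, SimpleGraph (Quotient s)) u v) =
        (sigmaAdj (⟨neighborSetoid G', neighborQuotientGraph G'⟩ :
          Σ s : Setoid V, SimpleGraph (Quotient s)) u v) := by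
      intro u v
      exact congrArg (fun p => sigmaAdj p u v) h
    ext u v
    have := hadj u v
    simp only [sigmaAdj] at this
    rw [← quotAdj_iff G u v, ← quotAdj_iff G' u v, this]
  · ext p
    simp only [Set.mem_range, Set.mem_setOf_eq]
    constructor
    · rintro ⟨G, rfl⟩
      exact quot_pointDetermining G
    · obtain ⟨s, H⟩ := p
      intro hpd
      refine ⟨liftGraph s H, ?_⟩
      have hs : neighborSetoid (liftGraph s H) = s := by
        ext u v
        show (liftGraph s H).neighborSet u = (liftGraph s H).neighborSet v ↔ s.r u v
        constructor
        · intro hN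
          have hH : H.neighborSet (Quotient.mk s u) = H.neighborSet (Quotient.mk s v) := by
            ext a
            induction a using Quotient.ind with
            | _ w =>
              have : w ∈ (liftGraph s H).neighborSet u ↔
                  w ∈ (liftGraph s H).neighborSet v := by rw [hN]
              exact this
          exact Quotient.exact (hpd _ _ hH)
        · intro hr
          have hq : Quotient.mk s u = Quotient.mk s v := Quotient.sound hr
          ext w
          show H.Adj (Quotient.mk s u) (Quotient.mk s w) ↔
            H.Adj (Quotient.mk s v) (Quotient.mk s w)
          rw [hq]
      refine sigma_graph_eq _ _ hs ?_
      intro u v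
      rw [quotAdj_iff]
      rfl
end

section
/- Let G be a connected simple graph on a finite vertex set that contains a cycle, and let S be its core, i.e., the unique maximal vertex set such that every vertex of S has at least two neighbors in S. Let F be the spanning subgraph of G whose edges are exactly those edges of G having at least one endpoint outside S. Then F is acyclic, and every connected component of F contains exactly one vertex of S. -/
open SimpleGraph Walk

section Aux
variable {V : Type*} {G : SimpleGraph V}

open SimpleGraph Walk

variable {V : Type*} {G : SimpleGraph V}

/-- The start vertex of a cycle has two distinct neighbors within the support. -/
lemma cycle_start_two_neighbors {w : V} {c : G.Walk w w} (hc : c.IsCycle) :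
    ∃ a b, a ≠ b ∧ a ∈ c.support ∧ b ∈ c.support ∧ G.Adj w a ∧ G.Adj w b := by
  cases c with
  | nil => exact absurd rfl hc.ne_nil
  | @cons _ x _ h q =>
    have hq3 : 2 ≤ q.length := by
      have := hc.three_le_length
      simp [Walk.length_cons] at this ⊢
      omega
    -- decompose q.reverse
    rcases hr : q.reverse with _ | ⟨h2, r⟩
    · exfalso
      have : q.reverse.length = 0 := by rw [hr]; rfl
      rw [Walk.length_reverse] at this
      omega
    · rename_i y
      refine ⟨x, y, ?_, ?_, ?_, h, h2⟩
      · rintro rfl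
        have hedge : s(w, x) ∈ q.edges := by
          have : s(w, x) ∈ q.reverse.edges := by
            rw [hr]; simp [Walk.edges_cons]
          rwa [Walk.edges_reverse, List.mem_reverse] at this
        have := hc.isTrail.edges_nodup
        rw [Walk.edges_cons] at this
        exact (List.nodup_cons.mp this).1 hedge
      · simp [Walk.support_cons]
      · have : y ∈ q.reverse.support := by rw [hr]; simp [Walk.support_cons]
        rw [Walk.support_reverse, List.mem_reverse] at this
        simp [Walk.support_cons, this]

/-- An interior vertex of a path has two distinct neighbors within the support. -/
lemma path_interior_two_neighbors {u v w : V} {p : G.Walk u v} (hp : p.IsPath)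
    (hw : w ∈ p.support) (hwu : w ≠ u) (hwv : w ≠ v) :
    ∃ a b, a ≠ b ∧ a ∈ p.support ∧ b ∈ p.support ∧ G.Adj w a ∧ G.Adj w b := by
  induction p with
  | nil => simp at hw; exact absurd hw hwu
  | @cons u x v h q ih =>
    rw [Walk.cons_isPath_iff] at hp
    rw [Walk.support_cons, List.mem_cons] at hw
    rcases hw with rfl | hw
    · exact absurd rfl hwu
    by_cases hwx : w = x
    · subst hwx
      cases q with
      | nil => exact absurd rfl hwv
      | @cons _ m _ h' q' =>
        refine ⟨u, m, ?_, ?_, ?_, h.symm, h'⟩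
        · rintro rfl
          exact hp.2 (by simp [Walk.support_cons])
        · simp [Walk.support_cons]
        · simp [Walk.support_cons]
    · obtain ⟨a, b, hab, ha, hb, h1, h2⟩ := ih hp.1 hw hwx hwv
      exact ⟨a, b, hab, by simp [Walk.support_cons, ha],
        by simp [Walk.support_cons, hb], h1, h2⟩

/-- Every vertex of a cycle has two distinct neighbors within the support. -/
lemma cycle_two_neighbors' {v w : V} {c : G.Walk v v} (hc : c.IsCycle)
    (hw : w ∈ c.support) :
    ∃ a b, a ≠ b ∧ a ∈ c.support ∧ b ∈ c.support ∧ G.Adj w a ∧ G.Adj w b := by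
  classical
  obtain ⟨a, b, hab, ha, hb, h1, h2⟩ := cycle_start_two_neighbors (hc.rotate hw)
  have hmem : ∀ {z}, G.Adj w z → z ∈ (c.rotate w hw).support → z ∈ c.support := by
    intro z hz hzs
    rw [Walk.support_eq_cons, List.mem_cons] at hzs
    rcases hzs with rfl | hzs
    · exact absurd hz (G.loopless.irrefl z)
    · exact List.mem_of_mem_tail ((Walk.support_rotate c w hw).mem_iff.mp hzs)
  exact ⟨a, b, hab, hmem h1 ha, hmem h2 hb, h1, h2⟩

end Aux

/-- The spanning subgraph of `G` whose edges are exactly those edges of `G`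
having at least one endpoint outside `S`. -/
def outsideEdgesSubgraph {V : Type*} (G : SimpleGraph V) (S : Set V) :
    SimpleGraph V where
  Adj a b := G.Adj a b ∧ (a ∉ S ∨ b ∉ S)
  symm := by
    constructor
    rintro a b ⟨h, hs⟩
    exact ⟨h.symm, hs.symm⟩
  loopless := by
    constructor
    rintro a ⟨h, _⟩
    exact (G.ne_of_adj h) rfl

/-- Let `G` be a connected simple graph on a finite vertex set containing a
cycle, and let `S` be its core (the unique maximal vertex set in which every
vertex has at least two neighbors).  Then the spanning subgraph `F` consisting
of the edges of `G` with at least one endpoint outside `S` is acyclic, and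
every connected component of `F` contains exactly one vertex of `S`. -/
theorem core_attachment_forest {V : Type*} [Fintype V] (G : SimpleGraph V)
    (hconn : G.Connected) (hcyc : ¬ G.IsAcyclic) (S : Set V)
    (hS₁ : ∀ v ∈ S, 2 ≤ (S ∩ G.neighborSet v).ncard)
    (hS₂ : ∀ T : Set V, (∀ v ∈ T, 2 ≤ (T ∩ G.neighborSet v).ncard) → T ⊆ S) :
    (outsideEdgesSubgraph G S).IsAcyclic ∧
      ∀ c : (outsideEdgesSubgraph G S).ConnectedComponent,
        ∃! v : V, v ∈ S ∧ (outsideEdgesSubgraph G S).connectedComponentMk v = c := by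
  classical
  set F := outsideEdgesSubgraph G S with hF
  have hFG : ∀ {a b}, F.Adj a b → G.Adj a b := fun h => h.1
  -- a generic counting helper
  have hpair : ∀ (T : Set V) (w a b : V), a ≠ b → a ∈ T → b ∈ T → G.Adj w a → G.Adj w b →
      2 ≤ (T ∩ G.neighborSet w).ncard := by
    intro T w a b hab ha hb h1 h2
    have hsub : ({a, b} : Set V) ⊆ T ∩ G.neighborSet w := by
      rintro x (rfl | rfl)
      · exact ⟨ha, h1⟩
      · exact ⟨hb, h2⟩
    calc 2 = ({a, b} : Set V).ncard := (Set.ncard_pair hab).symm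
      _ ≤ _ := Set.ncard_le_ncard hsub (Set.toFinite _)
  -- acyclicity of F
  have hacyc : F.IsAcyclic := by
    intro w c hc
    set T : Set V := S ∪ {x | x ∈ c.support} with hT
    have hTS : T ⊆ S := by
      refine hS₂ T ?_
      rintro v (hv | hv)
      · exact le_trans (hS₁ v hv) (Set.ncard_le_ncard
          (Set.inter_subset_inter_left _ Set.subset_union_left) (Set.toFinite _))
      · obtain ⟨a, b, hab, ha, hb, h1, h2⟩ := cycle_two_neighbors' hc hv
        exact hpair T v a b hab (Or.inr ha) (Or.inr hb) (hFG h1) (hFG h2)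
    -- first edge of the cycle lies inside S, contradiction
    have hnil : ¬ c.Nil := hc.not_nil
    have hadj : F.Adj w (c.getVert 1) := c.adj_snd hnil
    have hw1 : c.getVert 1 ∈ c.support := by
      rw [Walk.mem_support_iff_exists_getVert]
      exact ⟨1, rfl, by have := hc.three_le_length; omega⟩
    have hwS : w ∈ S := hTS (Or.inr c.start_mem_support)
    have h1S : c.getVert 1 ∈ S := hTS (Or.inr hw1)
    rcases hadj.2 with h | h
    · exact h hwS
    · exact h h1S
  -- at most one vertex of S in any F-component
  have huniq : ∀ u v : V, u ∈ S → v ∈ S → F.Reachable u v → u = v := by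
    intro u v hu hv hr
    by_contra hne
    obtain ⟨p0⟩ := hr
    obtain ⟨p, hp⟩ := p0.toPath
    set T : Set V := S ∪ {x | x ∈ p.support} with hT
    have hTS : T ⊆ S := by
      refine hS₂ T ?_
      rintro t (ht | ht)
      · exact le_trans (hS₁ t ht) (Set.ncard_le_ncard
          (Set.inter_subset_inter_left _ Set.subset_union_left) (Set.toFinite _))
      · by_cases htu : t = u
        · subst htu
          exact le_trans (hS₁ t hu) (Set.ncard_le_ncard
            (Set.inter_subset_inter_left _ Set.subset_union_left) (Set.toFinite _))
        by_cases htv : t = v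
        · subst htv
          exact le_trans (hS₁ t hv) (Set.ncard_le_ncard
            (Set.inter_subset_inter_left _ Set.subset_union_left) (Set.toFinite _))
        obtain ⟨a, b, hab, ha, hb, h1, h2⟩ := path_interior_two_neighbors hp ht htu htv
        exact hpair T t a b hab (Or.inr ha) (Or.inr hb) (hFG h1) (hFG h2)
    -- p is not nil, its first edge lies inside S, contradiction
    have hnil : ¬ p.Nil := by
      intro hn
      exact hne (Walk.Nil.eq hn)
    have hadj : F.Adj u (p.getVert 1) := p.adj_snd hnil
    have hw1 : p.getVert 1 ∈ p.support := by
      rw [Walk.mem_support_iff_exists_getVert]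
      refine ⟨1, rfl, ?_⟩
      have : p.length ≠ 0 := by
        intro h0
        exact hnil (Walk.nil_iff_length_eq.mpr h0)
      omega
    have h1S : p.getVert 1 ∈ S := hTS (Or.inr hw1)
    rcases hadj.2 with h | h
    · exact h hu
    · exact h h1S
  -- S is nonempty
  have hSne : S.Nonempty := by
    rw [SimpleGraph.isAcyclic_iff_forall_adj_isBridge] at hcyc
    push_neg at hcyc
    obtain ⟨v, w, hadj, hbr⟩ := hcyc
    rw [SimpleGraph.isBridge_iff_adj_and_forall_cycle_notMem (G.mem_edgeSet.mpr hadj)] at hbr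
    push_neg at hbr
    obtain ⟨x, c, hc, -⟩ := hbr
    have hT : {y | y ∈ c.support} ⊆ S := by
      refine hS₂ _ ?_
      intro y hy
      obtain ⟨a, b, hab, ha, hb, h1, h2⟩ := cycle_two_neighbors' hc hy
      exact hpair _ y a b hab ha hb h1 h2
    exact ⟨x, hT c.start_mem_support⟩
  -- every vertex reaches S in F
  obtain ⟨s, hs⟩ := hSne
  have key : ∀ {a b : V} (p : G.Walk a b), b ∈ S → ∃ x ∈ S, F.Reachable a x := by
    intro a b p
    induction p with
    | nil => exact fun h => ⟨_, h, Reachable.refl _⟩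
    | @cons a' y _ h q ih =>
      intro hb
      by_cases haS : a' ∈ S
      · exact ⟨a', haS, Reachable.refl a'⟩
      · obtain ⟨x, hx, hrx⟩ := ih hb
        exact ⟨x, hx, ((show F.Adj a' y from ⟨h, Or.inl haS⟩).reachable).trans hrx⟩
  have hreach : ∀ w : V, ∃ x ∈ S, F.Reachable w x := by
    intro w
    obtain ⟨p⟩ := hconn.preconnected w s
    exact key p hs
  refine ⟨hacyc, fun c => ?_⟩
  obtain ⟨w, rfl⟩ := c.exists_rep
  obtain ⟨x, hx, hrx⟩ := hreach w
  refine ⟨x, ⟨hx, (SimpleGraph.ConnectedComponent.sound hrx).symm⟩, ?_⟩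
  rintro y ⟨hy, hyc⟩
  have : F.Reachable y x :=
    SimpleGraph.ConnectedComponent.exact (hyc.trans (SimpleGraph.ConnectedComponent.sound hrx))
  exact huniq y x hy hx this
end

section
/- Let Φ be a class of finite simple graphs, invariant under graph isomorphism, such that: every graph in Φ is connected; the one-vertex graph belongs to Φ; Φ is closed under creating and deleting endpoints (for every graph G and vertex v of degree 1 in G, G belongs to Φ if and only if G − v belongs to Φ); and the graphs of Φ with at least two vertices are closed under creating and deleting duplicates of vertices (for every graph G with at least 3 vertices and distinct vertices v, w of G with the same neighborhood, G belongs to Φ if and only if G − v belongs to Φ). Then for every natural number n with n ≠ 2, the number of isomorphism classes of point-determining graphs in Φ on n vertices equals the number of isomorphism classes of graphs in Φ on n vertices having no vertex of degree 1. -/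
/-- The setoid on graphs on `Fin n` satisfying a predicate `P`, identifying
isomorphic graphs; its quotient is the set of isomorphism classes. -/
def graphIsoSetoid {n : ℕ} (P : SimpleGraph (Fin n) → Prop) :
    Setoid {G : SimpleGraph (Fin n) // P G} :=
  ⟨fun G H => Nonempty (G.1 ≃g H.1),
    ⟨fun _ => ⟨SimpleGraph.Iso.refl⟩,
     fun ⟨e⟩ => ⟨e.symm⟩,
     fun ⟨e⟩ ⟨f⟩ => ⟨e.trans f⟩⟩⟩

namespace PDEF
open SimpleGraph Set

variable {n : ℕ}

/-- `pd G`: point-determining. -/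
def pd (G : SimpleGraph (Fin n)) : Prop :=
  ∀ u v : Fin n, G.neighborSet u = G.neighborSet v → u = v

/-- `ef G`: no endpoints. -/
def ef (G : SimpleGraph (Fin n)) : Prop :=
  ∀ v : Fin n, (G.neighborSet v).ncard ≠ 1

lemma not_adj_of_dup {G : SimpleGraph (Fin n)} {v w : Fin n}
    (h : G.neighborSet v = G.neighborSet w) : ¬ G.Adj v w := fun hadj =>
  G.loopless.irrefl w (by have hv : w ∈ G.neighborSet v := hadj; rw [h] at hv; exact hv)

/-- demote `v` to a pendant vertex attached to `w`. -/
def demote (G : SimpleGraph (Fin n)) (v w : Fin n) : SimpleGraph (Fin n) where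
  Adj a b := (a ≠ v ∧ b ≠ v ∧ G.Adj a b) ∨ (v ≠ w ∧ (a = v ∧ b = w ∨ a = w ∧ b = v))
  symm := by
    constructor
    rintro a b (⟨h1, h2, h3⟩ | ⟨hvw, ⟨h1, h2⟩ | ⟨h1, h2⟩⟩)
    · exact Or.inl ⟨h2, h1, h3.symm⟩
    · exact Or.inr ⟨hvw, Or.inr ⟨h2, h1⟩⟩
    · exact Or.inr ⟨hvw, Or.inl ⟨h2, h1⟩⟩
  loopless := by
    constructor
    rintro a (⟨h1, h2, h3⟩ | ⟨hvw, ⟨h1, h2⟩ | ⟨h1, h2⟩⟩)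
    · exact G.loopless.irrefl _ h3
    · exact hvw (h1 ▸ h2)
    · exact hvw (h2 ▸ h1)

lemma demote_adj {G : SimpleGraph (Fin n)} {v w a b : Fin n} :
    (demote G v w).Adj a b ↔
      (a ≠ v ∧ b ≠ v ∧ G.Adj a b) ∨ (v ≠ w ∧ (a = v ∧ b = w ∨ a = w ∧ b = v)) :=
  Iff.rfl

/-- re-attach pendant `v` as a duplicate of `w`. -/
def promote (G : SimpleGraph (Fin n)) (v w : Fin n) : SimpleGraph (Fin n) where
  Adj a b := (a ≠ v ∧ b ≠ v ∧ G.Adj a b) ∨ (a = v ∧ b ≠ v ∧ G.Adj w b) ∨ (b = v ∧ a ≠ v ∧ G.Adj w a)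
  symm := by
    constructor
    rintro a b (⟨h1, h2, h3⟩ | ⟨h1, h2, h3⟩ | ⟨h1, h2, h3⟩)
    · exact Or.inl ⟨h2, h1, h3.symm⟩
    · exact Or.inr (Or.inr ⟨h1, h2, h3⟩)
    · exact Or.inr (Or.inl ⟨h1, h2, h3⟩)
  loopless := by
    constructor
    rintro a (⟨h1, h2, h3⟩ | ⟨h1, h2, h3⟩ | ⟨h1, h2, h3⟩)
    · exact G.loopless.irrefl _ h3
    · exact h2 h1
    · exact h2 h1

lemma promote_adj {G : SimpleGraph (Fin n)} {v w a b : Fin n} :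
    (promote G v w).Adj a b ↔
      (a ≠ v ∧ b ≠ v ∧ G.Adj a b) ∨ (a = v ∧ b ≠ v ∧ G.Adj w b) ∨ (b = v ∧ a ≠ v ∧ G.Adj w a) :=
  Iff.rfl

/-- a single rewriting step : `G'` is obtained from `G` by demoting one
vertex of a duplicate pair to a pendant vertex on the other. -/
def RStep (G G' : SimpleGraph (Fin n)) : Prop :=
  ∃ v w : Fin n, v ≠ w ∧ G.neighborSet v = G.neighborSet w ∧ G' = demote G v w

-- neighbor set computations
lemma neighborSet_demote_v {G : SimpleGraph (Fin n)} {v w : Fin n} (hvw : v ≠ w) :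
    (demote G v w).neighborSet v = {w} := by
  ext b
  simp only [mem_neighborSet, demote_adj, Set.mem_singleton_iff]
  constructor
  · rintro (⟨h1, _, _⟩ | ⟨_, ⟨_, h2⟩ | ⟨h1, h2⟩⟩)
    · exact absurd rfl h1
    · exact h2
    · exact absurd h1 hvw
  · rintro rfl
    refine Or.inr ⟨hvw, Or.inl ⟨trivial, rfl⟩⟩

lemma neighborSet_demote_w {G : SimpleGraph (Fin n)} {v w : Fin n} (hvw : v ≠ w)
    (hdup : G.neighborSet v = G.neighborSet w) :
    (demote G v w).neighborSet w = insert v (G.neighborSet w) := by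
  have hnadj : ¬ G.Adj v w := not_adj_of_dup hdup
  ext b
  simp only [mem_neighborSet, demote_adj, Set.mem_insert_iff]
  constructor
  · rintro (⟨_, _, h3⟩ | ⟨_, ⟨h1, _⟩ | ⟨_, h2⟩⟩)
    · exact Or.inr h3
    · exact absurd h1 hvw.symm
    · exact Or.inl h2
  · rintro (rfl | hb)
    · refine Or.inr ⟨hvw, Or.inr ⟨trivial, rfl⟩⟩
    · refine Or.inl ⟨hvw.symm, ?_, hb⟩
      rintro rfl
      exact hnadj hb.symm
  
lemma neighborSet_demote_other {G : SimpleGraph (Fin n)} {v w x : Fin n} (hxv : x ≠ v)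
    (hxw : x ≠ w) :
    (demote G v w).neighborSet x = G.neighborSet x \ {v} := by
  ext b
  simp only [mem_neighborSet, demote_adj, Set.mem_diff, Set.mem_singleton_iff]
  constructor
  · rintro (⟨_, h2, h3⟩ | ⟨_, ⟨h1, _⟩ | ⟨h1, _⟩⟩)
    · exact ⟨h3, h2⟩
    · exact absurd h1 hxv
    · exact absurd h1 hxw
  · rintro ⟨hb, hbv⟩
    exact Or.inl ⟨hxv, hbv, hb⟩

-- promote neighbor sets
lemma neighborSet_promote_v {G : SimpleGraph (Fin n)} {v w : Fin n} :
    (promote G v w).neighborSet v = G.neighborSet w \ {v} := by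
  ext b
  simp only [mem_neighborSet, promote_adj, Set.mem_diff, Set.mem_singleton_iff]
  constructor
  · rintro (⟨h1, _, _⟩ | ⟨_, h2, h3⟩ | ⟨h1, h2, _⟩)
    · exact absurd rfl h1
    · exact ⟨h3, h2⟩
    · exact absurd rfl h2
  · rintro ⟨hb, hbv⟩
    exact Or.inr (Or.inl ⟨trivial, hbv, hb⟩)

lemma neighborSet_promote_other {G : SimpleGraph (Fin n)} {v w x : Fin n} (hxv : x ≠ v) :
    (promote G v w).neighborSet x =
      (G.neighborSet x \ {v}) ∪ {b | b = v ∧ G.Adj w x} := by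
  ext b
  simp only [mem_neighborSet, promote_adj, Set.mem_union, Set.mem_diff, Set.mem_singleton_iff,
    Set.mem_setOf_eq]
  constructor
  · rintro (⟨_, h2, h3⟩ | ⟨h1, _, _⟩ | ⟨h1, _, h3⟩)
    · exact Or.inl ⟨h3, h2⟩
    · exact absurd h1 hxv
    · exact Or.inr ⟨h1, h3⟩
  · rintro (⟨hb, hbv⟩ | ⟨rfl, hadj⟩)
    · exact Or.inl ⟨hxv, hbv, hb⟩
    · exact Or.inr (Or.inr ⟨rfl, hxv, hadj⟩)

lemma ne_of_pendant {G : SimpleGraph (Fin n)} {v w : Fin n}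
    (hv : G.neighborSet v = {w}) : v ≠ w := by
  intro h
  have hw : w ∈ G.neighborSet v := by rw [hv]; exact rfl
  rw [h] at hw
  exact G.loopless.irrefl w hw

lemma adj_of_pendant {G : SimpleGraph (Fin n)} {v w : Fin n}
    (hv : G.neighborSet v = {w}) : G.Adj v w := by
  have hw : w ∈ G.neighborSet v := by rw [hv]; exact rfl
  exact hw

lemma demote_promote {G : SimpleGraph (Fin n)} {v w : Fin n}
    (hv : G.neighborSet v = {w}) : demote (promote G v w) v w = G := by
  have hvw : v ≠ w := ne_of_pendant hv
  have hadj : G.Adj v w := adj_of_pendant hv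
  ext a b
  simp only [demote_adj, promote_adj]
  constructor
  · rintro (⟨h1, h2, ⟨h3, h4, h5⟩ | ⟨h3, _, _⟩ | ⟨h3, _, _⟩⟩ | ⟨_, ⟨h1, h2⟩ | ⟨h1, h2⟩⟩)
    · exact h5
    · exact absurd h3 h1
    · exact absurd h3 h2
    · subst h1; subst h2; exact hadj
    · subst h1; subst h2; exact hadj.symm
  · intro hab
    by_cases hav : a = v
    · subst hav
      have hb : b ∈ G.neighborSet a := hab
      rw [hv] at hb
      exact Or.inr ⟨hvw, Or.inl ⟨rfl, hb⟩⟩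
    · by_cases hbv : b = v
      · subst hbv
        have ha : a ∈ G.neighborSet b := hab.symm
        rw [hv] at ha
        exact Or.inr ⟨hvw, Or.inr ⟨ha, rfl⟩⟩
      · exact Or.inl ⟨hav, hbv, Or.inl ⟨hav, hbv, hab⟩⟩

lemma promote_redex {G : SimpleGraph (Fin n)} {v w : Fin n}
    (hv : G.neighborSet v = {w}) :
    (promote G v w).neighborSet v = (promote G v w).neighborSet w := by
  have hvw : v ≠ w := ne_of_pendant hv
  rw [neighborSet_promote_v, neighborSet_promote_other hvw.symm]
  have hww : ¬ G.Adj w w := G.loopless.irrefl w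
  ext b
  simp only [Set.mem_union, Set.mem_setOf_eq]
  constructor
  · intro hb; exact Or.inl hb
  · rintro (hb | ⟨_, hadj⟩)
    · exact hb
    · exact absurd hadj hww

lemma rstep_promote {G : SimpleGraph (Fin n)} {v w : Fin n}
    (hv : G.neighborSet v = {w}) : RStep (promote G v w) G :=
  ⟨v, w, ne_of_pendant hv, promote_redex hv, (demote_promote hv).symm⟩

-- transport along isomorphisms
lemma iso_neighborSet {G H : SimpleGraph (Fin n)} (e : G ≃g H) (v : Fin n) :
    H.neighborSet (e v) = (e : Fin n → Fin n) '' (G.neighborSet v) := by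
  ext b
  simp only [mem_neighborSet, Set.mem_image]
  constructor
  · intro hb
    refine ⟨e.symm b, ?_, by simp⟩
    have h2 : G.Adj (e.symm (e v)) (e.symm b) := e.symm.map_adj_iff.2 hb
    simpa using h2
  · rintro ⟨a, ha, rfl⟩
    exact e.map_adj_iff.2 ha

def demoteIso {G H : SimpleGraph (Fin n)} (e : G ≃g H) (v w : Fin n) :
    demote G v w ≃g demote H (e v) (e w) where
  toEquiv := e.toEquiv
  map_rel_iff' := by
    intro a b
    show (demote H (e v) (e w)).Adj (e a) (e b) ↔ (demote G v w).Adj a b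
    have hinj : ∀ x y : Fin n, e x = e y ↔ x = y := fun x y => e.toEquiv.apply_eq_iff_eq
    simp only [demote_adj]
    constructor
    · rintro (⟨h1, h2, h3⟩ | ⟨h1, ⟨h2, h3⟩ | ⟨h2, h3⟩⟩)
      · exact Or.inl ⟨fun hh => h1 (by rw [hh]), fun hh => h2 (by rw [hh]), e.map_adj_iff.1 h3⟩
      · exact Or.inr ⟨fun hh => h1 (by rw [hh]), Or.inl ⟨(hinj _ _).1 h2, (hinj _ _).1 h3⟩⟩
      · exact Or.inr ⟨fun hh => h1 (by rw [hh]), Or.inr ⟨(hinj _ _).1 h2, (hinj _ _).1 h3⟩⟩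
    · rintro (⟨h1, h2, h3⟩ | ⟨h1, ⟨h2, h3⟩ | ⟨h2, h3⟩⟩)
      · exact Or.inl ⟨fun hh => h1 ((hinj _ _).1 hh), fun hh => h2 ((hinj _ _).1 hh),
          e.map_adj_iff.2 h3⟩
      · exact Or.inr ⟨fun hh => h1 ((hinj _ _).1 hh), Or.inl ⟨(hinj _ _).2 h2, (hinj _ _).2 h3⟩⟩
      · exact Or.inr ⟨fun hh => h1 ((hinj _ _).1 hh), Or.inr ⟨(hinj _ _).2 h2, (hinj _ _).2 h3⟩⟩

def promoteIso {G H : SimpleGraph (Fin n)} (e : G ≃g H) (v w : Fin n) :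
    promote G v w ≃g promote H (e v) (e w) where
  toEquiv := e.toEquiv
  map_rel_iff' := by
    intro a b
    show (promote H (e v) (e w)).Adj (e a) (e b) ↔ (promote G v w).Adj a b
    have hinj : ∀ x y : Fin n, e x = e y ↔ x = y := fun x y => e.toEquiv.apply_eq_iff_eq
    simp only [promote_adj]
    constructor
    · rintro (⟨h1, h2, h3⟩ | ⟨h1, h2, h3⟩ | ⟨h1, h2, h3⟩)
      · exact Or.inl ⟨fun hh => h1 (by rw [hh]), fun hh => h2 (by rw [hh]), e.map_adj_iff.1 h3⟩
      · exact Or.inr (Or.inl ⟨(hinj _ _).1 h1, fun hh => h2 (by rw [hh]),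
          e.map_adj_iff.1 h3⟩)
      · exact Or.inr (Or.inr ⟨(hinj _ _).1 h1, fun hh => h2 (by rw [hh]),
          e.map_adj_iff.1 h3⟩)
    · rintro (⟨h1, h2, h3⟩ | ⟨h1, h2, h3⟩ | ⟨h1, h2, h3⟩)
      · exact Or.inl ⟨fun hh => h1 ((hinj _ _).1 hh), fun hh => h2 ((hinj _ _).1 hh),
          e.map_adj_iff.2 h3⟩
      · exact Or.inr (Or.inl ⟨(hinj _ _).2 h1, fun hh => h2 ((hinj _ _).1 hh),
          e.map_adj_iff.2 h3⟩)
      · exact Or.inr (Or.inr ⟨(hinj _ _).2 h1, fun hh => h2 ((hinj _ _).1 hh),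
          e.map_adj_iff.2 h3⟩)

lemma rstep_transport {G H G' : SimpleGraph (Fin n)} (e : G ≃g H) (h : RStep G G') :
    ∃ H', RStep H H' ∧ Nonempty (G' ≃g H') := by
  obtain ⟨v, w, hvw, hdup, rfl⟩ := h
  refine ⟨demote H (e v) (e w), ⟨e v, e w, ?_, ?_, rfl⟩, ⟨demoteIso e v w⟩⟩
  · intro hh; exact hvw (e.toEquiv.injective hh)
  · rw [iso_neighborSet e v, iso_neighborSet e w, hdup]

-- Φ-transport along a rewriting step
lemma induce_demote {G : SimpleGraph (Fin n)} {v w : Fin n} :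
    (demote G v w).induce {u : Fin n | u ≠ v} = G.induce {u : Fin n | u ≠ v} := by
  ext a b
  show (demote G v w).Adj a b ↔ G.Adj a b
  have ha : (a : Fin n) ≠ v := a.2
  have hb : (b : Fin n) ≠ v := b.2
  simp only [demote_adj]
  constructor
  · rintro (⟨_, _, h3⟩ | ⟨_, ⟨h1, _⟩ | ⟨_, h2⟩⟩)
    · exact h3
    · exact absurd h1 ha
    · exact absurd h2 hb
  · intro h
    exact Or.inl ⟨ha, hb, h⟩

section Phi

variable (Φ : ∀ {V : Type}, SimpleGraph V → Prop)

lemma phi_demote_iff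
    (hend : ∀ {V : Type} [Fintype V] (G : SimpleGraph V) (v : V),
      (G.neighborSet v).ncard = 1 →
      (Φ G ↔ Φ (G.induce {u : V | u ≠ v})))
    (hdup : ∀ {V : Type} [Fintype V] (G : SimpleGraph V) (v w : V),
      v ≠ w → 3 ≤ Fintype.card V → G.neighborSet v = G.neighborSet w →
      (Φ G ↔ Φ (G.induce {u : V | u ≠ v})))
    (hn3 : 3 ≤ n) {G : SimpleGraph (Fin n)} {v w : Fin n}
    (hvw : v ≠ w) (hd : G.neighborSet v = G.neighborSet w) :
    (Φ G ↔ Φ (demote G v w)) := by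
  have hcard : 3 ≤ Fintype.card (Fin n) := by simpa using hn3
  have h1 : Φ G ↔ Φ (G.induce {u : Fin n | u ≠ v}) := hdup G v w hvw hcard hd
  have h2 : Φ (demote G v w) ↔ Φ ((demote G v w).induce {u : Fin n | u ≠ v}) := by
    refine hend (demote G v w) v ?_
    rw [neighborSet_demote_v hvw]
    exact Set.ncard_singleton w
  rw [h1, h2, induce_demote]

lemma phi_rstep_iff
    (hend : ∀ {V : Type} [Fintype V] (G : SimpleGraph V) (v : V),
      (G.neighborSet v).ncard = 1 →
      (Φ G ↔ Φ (G.induce {u : V | u ≠ v})))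
    (hdup : ∀ {V : Type} [Fintype V] (G : SimpleGraph V) (v w : V),
      v ≠ w → 3 ≤ Fintype.card V → G.neighborSet v = G.neighborSet w →
      (Φ G ↔ Φ (G.induce {u : V | u ≠ v})))
    (hn3 : 3 ≤ n) {G G' : SimpleGraph (Fin n)} (h : RStep G G') :
    (Φ G ↔ Φ G') := by
  obtain ⟨v, w, hvw, hd, rfl⟩ := h
  exact phi_demote_iff Φ hend hdup hn3 hvw hd

end Phi

-- connectivity lemmas
lemma exists_adj_outside_walk {G : SimpleGraph (Fin n)} (S : Set (Fin n)) :
    ∀ {a b : Fin n}, G.Walk a b → a ∈ S → b ∉ S →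
      ∃ a' ∈ S, ∃ b', b' ∉ S ∧ G.Adj a' b' := by
  intro a b p
  induction p with
  | nil => intro ha hb; exact absurd ha hb
  | @cons u x y hadj p ih =>
      intro ha hb
      by_cases hx : x ∈ S
      · exact ih hx hb
      · exact ⟨u, ha, x, hx, hadj⟩

lemma exists_adj_outside {G : SimpleGraph (Fin n)} (h : G.Connected) {S : Set (Fin n)}
    {a₀ b₀ : Fin n} (ha₀ : a₀ ∈ S) (hb₀ : b₀ ∉ S) :
    ∃ a ∈ S, ∃ b, b ∉ S ∧ G.Adj a b := by
  obtain ⟨p⟩ := h.preconnected a₀ b₀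
  exact exists_adj_outside_walk S p ha₀ hb₀

lemma neighbor_nonempty {G : SimpleGraph (Fin n)} (h : G.Connected) {v u : Fin n}
    (huv : u ≠ v) : (G.neighborSet v).Nonempty := by
  obtain ⟨a, ha, b, hb, hadj⟩ := exists_adj_outside h (S := {v}) rfl
    (by simpa using huv)
  rw [Set.mem_singleton_iff] at ha
  subst ha
  exact ⟨b, hadj⟩

-- measures
/-- set of pendant (degree-one) vertices. -/
def pendSet (G : SimpleGraph (Fin n)) : Set (Fin n) :=
  {x : Fin n | (G.neighborSet x).ncard = 1}

lemma edgeSet_demote {G : SimpleGraph (Fin n)} {v w : Fin n} (hvw : v ≠ w) :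
    (demote G v w).edgeSet = (G.edgeSet \ G.incidenceSet v) ∪ {s(v, w)} := by
  ext e
  induction e with
  | _ x y =>
    simp only [SimpleGraph.mem_edgeSet, demote_adj, Set.mem_union, Set.mem_diff,
      SimpleGraph.incidenceSet, Set.mem_setOf_eq, Set.mem_singleton_iff, Sym2.mem_iff,
      Sym2.eq_iff]
    constructor
    · rintro (⟨h1, h2, h3⟩ | ⟨_, ⟨h1, h2⟩ | ⟨h1, h2⟩⟩)
      · exact Or.inl ⟨h3, fun hh => by
          rcases hh.2 with h | h
          · exact h1 h.symm
          · exact h2 h.symm⟩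
      · exact Or.inr (Or.inl ⟨h1, h2⟩)
      · exact Or.inr (Or.inr ⟨h1, h2⟩)
    · rintro (⟨h1, h2⟩ | ⟨h1, h2⟩ | ⟨h1, h2⟩)
      · refine Or.inl ⟨?_, ?_, h1⟩
        · intro hh; exact h2 ⟨h1, Or.inl hh.symm⟩
        · intro hh; exact h2 ⟨h1, Or.inr hh.symm⟩
      · exact Or.inr ⟨hvw, Or.inl ⟨h1, h2⟩⟩
      · exact Or.inr ⟨hvw, Or.inr ⟨h1, h2⟩⟩

lemma ncard_incidenceSet {G : SimpleGraph (Fin n)} (v : Fin n) :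
    (G.incidenceSet v).ncard = (G.neighborSet v).ncard := by
  rw [← Nat.card_coe_set_eq, ← Nat.card_coe_set_eq]
  exact Nat.card_congr (G.incidenceSetEquivNeighborSet v)

lemma ncard_edgeSet_demote {G : SimpleGraph (Fin n)} {v w : Fin n} (hvw : v ≠ w)
    (hd : G.neighborSet v = G.neighborSet w) :
    (demote G v w).edgeSet.ncard + (G.neighborSet v).ncard = G.edgeSet.ncard + 1 := by
  have hsub : G.incidenceSet v ⊆ G.edgeSet := G.incidenceSet_subset v
  have hnotmem : s(v, w) ∉ G.edgeSet \ G.incidenceSet v := by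
    rintro ⟨he, hi⟩
    exact hi ⟨he, Sym2.mem_mk_left v w⟩
  rw [edgeSet_demote hvw, Set.union_singleton, Set.ncard_insert_of_notMem hnotmem,
    Set.ncard_diff hsub, ncard_incidenceSet]
  have hle : (G.neighborSet v).ncard ≤ G.edgeSet.ncard := by
    rw [← ncard_incidenceSet]
    exact Set.ncard_le_ncard hsub
  omega

lemma pend_le {G : SimpleGraph (Fin n)} : (pendSet G).ncard ≤ n := by
  have h := Set.ncard_le_ncard (Set.subset_univ (pendSet G)) Set.finite_univ
  rwa [Set.ncard_univ, Nat.card_eq_fintype_card, Fintype.card_fin] at h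

lemma edge_le {G : SimpleGraph (Fin n)} : G.edgeSet.ncard ≤ n * n + n := by
  have h := Set.ncard_le_ncard (Set.subset_univ G.edgeSet) Set.finite_univ
  rw [Set.ncard_univ, Nat.card_eq_fintype_card, Sym2.card, Fintype.card_fin] at h
  calc G.edgeSet.ncard ≤ (n + 1).choose 2 := h
    _ ≤ (n + 1) * n / 2 := by rw [Nat.choose_two_right]; simp
    _ ≤ (n + 1) * n := Nat.div_le_self _ _
    _ = n * n + n := by ring

/-- the pendant vertices after a `d = 1` demotion. -/
lemma pendSet_demote_d1 {G : SimpleGraph (Fin n)} {v w : Fin n} (hvw : v ≠ w)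
    (hd : G.neighborSet v = G.neighborSet w) (hconn : G.Connected) (hn4 : 4 ≤ n)
    (hd1 : (G.neighborSet v).ncard = 1) :
    pendSet (demote G v w) = pendSet G \ {w} := by
  obtain ⟨x₀, hx₀⟩ := Set.ncard_eq_one.1 hd1
  have hvx₀ : G.Adj v x₀ := by
    have : x₀ ∈ G.neighborSet v := by rw [hx₀]; exact rfl
    exact this
  have hwx₀ : G.Adj w x₀ := by
    have : x₀ ∈ G.neighborSet w := by rw [← hd, hx₀]; exact rfl
    exact this
  have hx₀v : x₀ ≠ v := fun h => G.loopless.irrefl v (h ▸ hvx₀)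
  have hx₀w : x₀ ≠ w := fun h => G.loopless.irrefl w (h ▸ hwx₀)
  -- x₀ has at least one neighbor besides v and w
  have hx₀big : ¬ G.neighborSet x₀ ⊆ {v, w} := by
    intro hsub
    have huniv : ¬ (Set.univ : Set (Fin n)) ⊆ {v, w, x₀} := by
      intro hu
      have h3 : ({v, w, x₀} : Set (Fin n)).ncard ≤ 3 := by
        apply le_trans (Set.ncard_insert_le _ _)
        apply Nat.succ_le_succ
        apply le_trans (Set.ncard_insert_le _ _)
        simp
      have hn : (Set.univ : Set (Fin n)).ncard ≤ 3 :=
        le_trans (Set.ncard_le_ncard hu (Set.toFinite _)) h3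
      rw [Set.ncard_univ, Nat.card_eq_fintype_card, Fintype.card_fin] at hn
      omega
    obtain ⟨b₀, hb₀⟩ : ∃ b₀, b₀ ∉ ({v, w, x₀} : Set (Fin n)) := by
      by_contra hcon
      push_neg at hcon
      exact huniv (fun u _ => hcon u)
    obtain ⟨a, ha, b, hb, hadj⟩ := exists_adj_outside hconn
      (S := {v, w, x₀}) (a₀ := v) (b₀ := b₀) (by simp) hb₀
    rcases ha with rfl | rfl | rfl
    · have : b ∈ G.neighborSet a := hadj
      rw [hx₀] at this
      exact hb (by simp [this])
    · have : b ∈ G.neighborSet a := hadj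
      rw [← hd, hx₀] at this
      exact hb (by simp [this])
    · have hmem : b ∈ G.neighborSet a := hadj
      have hbvw := hsub hmem
      simp only [Set.mem_insert_iff, Set.mem_singleton_iff] at hbvw
      apply hb
      simp only [Set.mem_insert_iff, Set.mem_singleton_iff]
      tauto
  ext x
  by_cases hxv : x = v
  · subst hxv
    simp only [pendSet, Set.mem_setOf_eq, Set.mem_diff, Set.mem_singleton_iff]
    rw [neighborSet_demote_v hvw]
    simp [Set.ncard_singleton, hd1, hvw]
  · by_cases hxw : x = w
    · subst hxw
      simp only [pendSet, Set.mem_setOf_eq, Set.mem_diff, Set.mem_singleton_iff]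
      rw [neighborSet_demote_w hvw hd]
      have : (insert v (G.neighborSet x)).ncard = 2 := by
        rw [← hd, hx₀]
        rw [Set.ncard_insert_of_notMem (by simp [hvx₀.ne']; exact fun h => hx₀v h.symm)]
        simp
      simp [this]
    · by_cases hxx₀ : x = x₀
      · subst hxx₀
        simp only [pendSet, Set.mem_setOf_eq, Set.mem_diff, Set.mem_singleton_iff]
        rw [neighborSet_demote_other hxv hxw]
        have hvm : v ∈ G.neighborSet x := hvx₀.symm
        have hwm : w ∈ G.neighborSet x := hwx₀.symm
        constructor
        · intro h1
          obtain ⟨y, hy⟩ := Set.ncard_eq_one.1 h1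
          have hwy : w ∈ G.neighborSet x \ {v} := ⟨hwm, by simp [hx₀w]; exact fun h => hvw h.symm⟩
          rw [hy] at hwy
          have : G.neighborSet x ⊆ {v, w} := by
            intro z hz
            by_cases hzv : z = v
            · simp [hzv]
            · have : z ∈ G.neighborSet x \ {v} := ⟨hz, hzv⟩
              rw [hy] at this
              rw [Set.mem_singleton_iff] at this hwy
              simp [this, hwy]
          exact absurd this hx₀big
        · intro ⟨h1, _⟩
          exfalso
          obtain ⟨y, hy⟩ := Set.ncard_eq_one.1 h1
          have : v = y := by rw [← Set.mem_singleton_iff, ← hy]; exact hvm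
          have hw : w = y := by rw [← Set.mem_singleton_iff, ← hy]; exact hwm
          exact hvw (this.trans hw.symm)
      · -- x untouched
        simp only [pendSet, Set.mem_setOf_eq, Set.mem_diff, Set.mem_singleton_iff]
        rw [neighborSet_demote_other hxv hxw]
        have : v ∉ G.neighborSet x := by
          intro hmem
          have hax : G.Adj x v := hmem
          have hmem2 : x ∈ G.neighborSet v := hax.symm
          rw [hx₀] at hmem2
          exact hxx₀ hmem2
        rw [Set.diff_singleton_eq_self this]
        simp [hxw]

lemma w_mem_pend {G : SimpleGraph (Fin n)} {v w : Fin n}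
    (hd : G.neighborSet v = G.neighborSet w)
    (hd1 : (G.neighborSet v).ncard = 1) : w ∈ pendSet G := by
  simp only [pendSet, Set.mem_setOf_eq]
  rw [← hd]; exact hd1

/-- the combined measure that decreases along rewriting steps. -/
noncomputable def mu (G : SimpleGraph (Fin n)) : ℕ := (n + 1) * G.edgeSet.ncard + (pendSet G).ncard

/-- the combined measure that increases along rewriting steps. -/
noncomputable def nu (G : SimpleGraph (Fin n)) : ℕ :=
  (n + 1) * (n * n + n - G.edgeSet.ncard) + (n - (pendSet G).ncard)

lemma mu_nu_step {G G' : SimpleGraph (Fin n)} (h : RStep G G') (hconn : G.Connected)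
    (hn4 : 4 ≤ n) : mu G' < mu G ∧ nu G < nu G' := by
  obtain ⟨v, w, hvw, hd, rfl⟩ := h
  have hE := ncard_edgeSet_demote hvw hd
  have hdpos : 1 ≤ (G.neighborSet v).ncard := by
    rw [Nat.succ_le_iff, Set.ncard_pos]
    exact neighbor_nonempty hconn hvw.symm
  have hEle : G.edgeSet.ncard ≤ n * n + n := edge_le
  have hE'le : (demote G v w).edgeSet.ncard ≤ n * n + n := edge_le
  have hple : (pendSet G).ncard ≤ n := pend_le
  have hp'le : (pendSet (demote G v w)).ncard ≤ n := pend_le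
  by_cases hd1 : (G.neighborSet v).ncard = 1
  · have hpend := pendSet_demote_d1 hvw hd hconn hn4 hd1
    have hwmem := w_mem_pend hd hd1
    have hp' : (pendSet (demote G v w)).ncard = (pendSet G).ncard - 1 := by
      rw [hpend]
      exact Set.ncard_diff_singleton_of_mem hwmem
    have hppos : 1 ≤ (pendSet G).ncard :=
      Nat.succ_le_iff.2 ((Set.ncard_pos (Set.toFinite _)).2 ⟨w, hwmem⟩)
    have hEeq : (demote G v w).edgeSet.ncard = G.edgeSet.ncard := by omega
    unfold mu nu
    rw [hEeq]
    omega
  · have hd2 : 2 ≤ (G.neighborSet v).ncard := by omega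
    unfold mu nu
    have h2 : (demote G v w).edgeSet.ncard + 1 ≤ G.edgeSet.ncard := by omega
    constructor
    · calc (n + 1) * (demote G v w).edgeSet.ncard + (pendSet (demote G v w)).ncard
          ≤ (n + 1) * (demote G v w).edgeSet.ncard + n := by omega
        _ < (n + 1) * ((demote G v w).edgeSet.ncard + 1) := by
            have hexp : (n + 1) * ((demote G v w).edgeSet.ncard + 1) =
                (n + 1) * (demote G v w).edgeSet.ncard + (n + 1) := by ring
            omega
        _ ≤ (n + 1) * G.edgeSet.ncard := by
            exact Nat.mul_le_mul_left _ h2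
        _ ≤ (n + 1) * G.edgeSet.ncard + (pendSet G).ncard := by omega
    · have hnn : n * n + n - (demote G v w).edgeSet.ncard ≥
          (n * n + n - G.edgeSet.ncard) + 1 := by omega
      have hml := Nat.mul_le_mul_left (n + 1) hnn
      have hexp : (n + 1) * ((n * n + n - G.edgeSet.ncard) + 1) =
          (n + 1) * (n * n + n - G.edgeSet.ncard) + (n + 1) := by ring
      omega

-- isomorphism invariance
lemma ncard_edgeSet_iso {G H : SimpleGraph (Fin n)} (e : G ≃g H) :
    G.edgeSet.ncard = H.edgeSet.ncard := by
  rw [← Nat.card_coe_set_eq, ← Nat.card_coe_set_eq]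
  exact Nat.card_congr e.mapEdgeSet

lemma ncard_neighborSet_iso {G H : SimpleGraph (Fin n)} (e : G ≃g H) (v : Fin n) :
    (H.neighborSet (e v)).ncard = (G.neighborSet v).ncard := by
  rw [iso_neighborSet e v]
  exact Set.ncard_image_of_injective _ e.toEquiv.injective

lemma pendSet_iso {G H : SimpleGraph (Fin n)} (e : G ≃g H) :
    pendSet H = (e : Fin n → Fin n) '' pendSet G := by
  ext y
  simp only [pendSet, Set.mem_setOf_eq, Set.mem_image]
  constructor
  · intro hy
    refine ⟨e.symm y, ?_, by simp⟩
    have h2 := ncard_neighborSet_iso e (e.symm y)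
    simp only [RelIso.apply_symm_apply] at h2
    rw [← h2]
    exact hy
  · rintro ⟨x, hx, rfl⟩
    rw [ncard_neighborSet_iso e x]
    exact hx

lemma ncard_pendSet_iso {G H : SimpleGraph (Fin n)} (e : G ≃g H) :
    (pendSet G).ncard = (pendSet H).ncard := by
  rw [pendSet_iso e]
  exact (Set.ncard_image_of_injective _ (e.toEquiv.injective : Function.Injective
    (e : Fin n → Fin n))).symm

lemma mu_iso {G H : SimpleGraph (Fin n)} (e : G ≃g H) : mu G = mu H := by
  unfold mu
  rw [ncard_edgeSet_iso e, ncard_pendSet_iso e]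

lemma nu_iso {G H : SimpleGraph (Fin n)} (e : G ≃g H) : nu G = nu H := by
  unfold nu
  rw [ncard_edgeSet_iso e, ncard_pendSet_iso e]

lemma pd_iso {G H : SimpleGraph (Fin n)} (e : G ≃g H) (h : pd G) : pd H := by
  intro u v huv
  have hu : u = e (e.symm u) := by simp
  have hv : v = e (e.symm v) := by simp
  rw [hu, hv, iso_neighborSet e, iso_neighborSet e] at huv
  have := Set.image_eq_image (e.toEquiv.injective) |>.1 huv
  have h2 := h _ _ this
  rw [hu, hv, h2]

lemma ef_iso {G H : SimpleGraph (Fin n)} (e : G ≃g H) (h : ef G) : ef H := by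
  intro v hv
  have h2 := ncard_neighborSet_iso e (e.symm v)
  simp only [RelIso.apply_symm_apply] at h2
  rw [h2] at hv
  exact h _ hv

-- duplicate swap automorphism
def dupSwap {G : SimpleGraph (Fin n)} {u u' : Fin n}
    (hd : G.neighborSet u = G.neighborSet u') : G ≃g G where
  toEquiv := Equiv.swap u u'
  map_rel_iff' := by
    intro a b
    have key : ∀ x y : Fin n, G.Adj x y → G.Adj (Equiv.swap u u' x) (Equiv.swap u u' y) := by
      intro x y hxy
      rcases eq_or_ne x u with rfl | hxu
      · rw [Equiv.swap_apply_left]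
        rcases eq_or_ne y x with rfl | hyx
        · exact absurd hxy (G.loopless.irrefl _)
        · rcases eq_or_ne y u' with rfl | hyu'
          · exact absurd hxy (not_adj_of_dup hd)
          · rw [Equiv.swap_apply_of_ne_of_ne hyx hyu']
            have : y ∈ G.neighborSet x := hxy
            rw [hd] at this
            exact this
      · rcases eq_or_ne x u' with rfl | hxu'
        · rw [Equiv.swap_apply_right]
          rcases eq_or_ne y u with rfl | hyu
          · exact absurd hxy.symm (not_adj_of_dup hd)
          · rcases eq_or_ne y x with rfl | hyx
            · exact absurd hxy (G.loopless.irrefl _)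
            · rw [Equiv.swap_apply_of_ne_of_ne hyu hyx]
              have : y ∈ G.neighborSet x := hxy
              rw [← hd] at this
              exact this
        · rw [Equiv.swap_apply_of_ne_of_ne hxu hxu']
          rcases eq_or_ne y u with rfl | hyu
          · rw [Equiv.swap_apply_left]
            have : x ∈ G.neighborSet y := hxy.symm
            rw [hd] at this
            exact this.symm
          · rcases eq_or_ne y u' with rfl | hyu'
            · rw [Equiv.swap_apply_right]
              have : x ∈ G.neighborSet y := hxy.symm
              rw [← hd] at this
              exact this.symm
            · rw [Equiv.swap_apply_of_ne_of_ne hyu hyu']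
              exact hxy
    constructor
    · intro h
      have h2 := key _ _ h
      simpa [Equiv.swap_apply_self] using h2
    · exact key a b

@[simp] lemma dupSwap_apply {G : SimpleGraph (Fin n)} {u u' : Fin n}
    (hd : G.neighborSet u = G.neighborSet u') (x : Fin n) :
    (dupSwap hd) x = Equiv.swap u u' x := rfl

lemma iso_trans_apply {G : SimpleGraph (Fin n)} (f g : G ≃g G) (x : Fin n) :
    (f.trans g) x = g (f x) := rfl

-- commutation of independent steps
set_option maxHeartbeats 1000000 in
lemma demote_demote_comm {G : SimpleGraph (Fin n)} {v w v' w' : Fin n}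
    (h1 : v ≠ v') (h2 : v ≠ w') (h3 : w ≠ v') :
    demote (demote G v w) v' w' = demote (demote G v' w') v w := by
  ext a b
  simp only [demote_adj]
  constructor <;> intro h <;> aesop

lemma promote_demote {G : SimpleGraph (Fin n)} {v w : Fin n} (hvw : v ≠ w)
    (hd : G.neighborSet v = G.neighborSet w) :
    promote (demote G v w) v w = G := by
  have hnadj : ¬ G.Adj v w := not_adj_of_dup hd
  ext a b
  simp only [promote_adj, demote_adj]
  constructor
  · rintro (⟨h1, h2, ⟨_, _, h5⟩ | ⟨_, ⟨h3, _⟩ | ⟨_, h4⟩⟩⟩ | ⟨rfl, h2, hD⟩ | ⟨rfl, h2, hD⟩)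
    · exact h5
    · exact absurd h3 h1
    · exact absurd h4 h2
    · -- a = v, D.Adj w b
      rcases hD with ⟨_, _, h5⟩ | ⟨_, ⟨h3, _⟩ | ⟨_, h4⟩⟩
      · have : b ∈ G.neighborSet w := h5
        rw [← hd] at this
        exact this
      · exact absurd h3 hvw.symm
      · exact absurd h4 h2
    · -- b = v, D.Adj w a
      rcases hD with ⟨_, _, h5⟩ | ⟨_, ⟨h3, _⟩ | ⟨_, h4⟩⟩
      · have : a ∈ G.neighborSet w := h5
        rw [← hd] at this
        exact (this : G.Adj _ _).symm
      · exact absurd h3 hvw.symm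
      · exact absurd h4 h2
  · intro hab
    by_cases hav : a = v
    · subst hav
      have hbv : b ≠ a := fun hh => G.loopless.irrefl a (hh ▸ hab)
      have hb : b ∈ G.neighborSet a := hab
      rw [hd] at hb
      exact Or.inr (Or.inl ⟨rfl, hbv, Or.inl ⟨hvw.symm, hbv, hb⟩⟩)
    · by_cases hbv : b = v
      · subst hbv
        have hav' : a ≠ b := fun hh => G.loopless.irrefl b (hh ▸ hab)
        have ha : a ∈ G.neighborSet b := hab.symm
        rw [hd] at ha
        exact Or.inr (Or.inr ⟨rfl, hav', Or.inl ⟨hvw.symm, hav', ha⟩⟩)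
      · exact Or.inl ⟨hav, hbv, Or.inl ⟨hav, hbv, hab⟩⟩

lemma rstep_pred_eq {H G : SimpleGraph (Fin n)} (h : RStep H G) :
    ∃ v w, G.neighborSet v = {w} ∧ H = promote G v w := by
  obtain ⟨v, w, hvw, hd, rfl⟩ := h
  exact ⟨v, w, neighborSet_demote_v hvw, (promote_demote hvw hd).symm⟩

set_option maxHeartbeats 1000000 in
lemma promote_promote_comm {G : SimpleGraph (Fin n)} {v w v' w' : Fin n}
    (hAv : ∀ b, G.Adj v b ↔ b = w) (hAv' : ∀ b, G.Adj v' b ↔ b = w')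
    (hvv' : v ≠ v') (hww' : w ≠ w') (hvw' : v ≠ w') (hv'w : v' ≠ w)
    (hvw : v ≠ w) (hv'w'2 : v' ≠ w') :
    promote (promote G v w) v' w' = promote (promote G v' w') v w := by
  have hsymm : G.Adj w w' ↔ G.Adj w' w := ⟨fun h => h.symm, fun h => h.symm⟩
  have hnwv' : ¬ G.Adj w v' := fun h => hww' (((hAv' w).1 h.symm))
  have hnw'v : ¬ G.Adj w' v := fun h => hww' ((hAv w').1 h.symm).symm
  ext a b
  simp only [promote_adj]
  constructor <;> intro h <;> aesop

lemma adj_iff_of_pendant {G : SimpleGraph (Fin n)} {v w : Fin n}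
    (hv : G.neighborSet v = {w}) : ∀ b, G.Adj v b ↔ b = w := by
  intro b
  rw [← SimpleGraph.mem_neighborSet, hv, Set.mem_singleton_iff]

-- also fix demote_demote_comm proof to aesop

open SimpleGraph in
lemma rstep_confluence {G H₁ H₂ : SimpleGraph (Fin n)}
    (s1 : RStep G H₁) (s2 : RStep G H₂) :
    Nonempty (H₁ ≃g H₂) ∨
      ∃ K₁ K₂, RStep H₁ K₁ ∧ RStep H₂ K₂ ∧ Nonempty (K₁ ≃g K₂) := by
  obtain ⟨v, w, hvw, hd, rfl⟩ := s1
  obtain ⟨v', w', hv'w', hd', rfl⟩ := s2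
  by_cases hvv' : v = v'
  · subst hvv'
    by_cases hww' : w = w'
    · subst hww'
      exact Or.inl ⟨Iso.refl⟩
    · -- same demoted vertex, different keepers : swap w w'
      left
      have hdw : G.neighborSet w = G.neighborSet w' := by rw [← hd, hd']
      have hiso := demoteIso (dupSwap hdw) v w
      have hev : (dupSwap hdw) v = v := by
        rw [dupSwap_apply]
        exact Equiv.swap_apply_of_ne_of_ne hvw hv'w'
      have hew : (dupSwap hdw) w = w' := by
        rw [dupSwap_apply]; exact Equiv.swap_apply_left w w'
      rw [hev, hew] at hiso
      exact ⟨hiso⟩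
  · by_cases hwv' : w = v'
    · -- v' = w
      rcases hwv'
      by_cases hw'v : w' = v
      · rcases hw'v
        -- (v,w) and (w,v) : swap v w
        left
        have hiso := demoteIso (dupSwap hd) v w
        have hev : (dupSwap hd) v = w := by
          rw [dupSwap_apply]; exact Equiv.swap_apply_left v w
        have hew : (dupSwap hd) w = v := by
          rw [dupSwap_apply]; exact Equiv.swap_apply_right v w
        rw [hev, hew] at hiso
        exact ⟨hiso⟩
      · -- (v,w), (w,w') : need σ with σ v = w, σ w = w'
        left
        have hww' : w ≠ w' := hv'w'
        have hvw'2 : v ≠ w' := fun hh => hw'v hh.symm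
        have hdvw' : G.neighborSet v = G.neighborSet w' := by rw [hd, hd']
        have hdw'w : G.neighborSet w' = G.neighborSet w := by rw [← hd', ← hd]
        set σ := (dupSwap hdvw').trans (dupSwap hdw'w) with hσ
        have hev : σ v = w := by
          rw [hσ, iso_trans_apply, dupSwap_apply, dupSwap_apply,
            Equiv.swap_apply_left, Equiv.swap_apply_left]
        have hew : σ w = w' := by
          rw [hσ, iso_trans_apply, dupSwap_apply, dupSwap_apply,
            Equiv.swap_apply_of_ne_of_ne (fun hh => hvw hh.symm) hww',
            Equiv.swap_apply_right]
        have hiso := demoteIso σ v w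
        rw [hev, hew] at hiso
        exact ⟨hiso⟩
    · by_cases hw'v : w' = v
      · -- w' = v ; after `rcases`, w' is replaced by v
        rcases hw'v
        -- redexes (v, w) and (v', v), goal : demote G v w ≃g demote G v' v
        left
        have h1 : G.neighborSet v = G.neighborSet v' := hd'.symm
        set σ := (dupSwap h1).trans (dupSwap hd) with hσ
        have hv'v : v' ≠ v := fun hh => hvv' hh.symm
        have hv'w : v' ≠ w := fun hh => hwv' hh.symm
        have hev : σ v = v' := by
          rw [hσ, iso_trans_apply, dupSwap_apply, dupSwap_apply,
            Equiv.swap_apply_left,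
            Equiv.swap_apply_of_ne_of_ne hv'v hv'w]
        have hew : σ w = v := by
          rw [hσ, iso_trans_apply, dupSwap_apply, dupSwap_apply,
            Equiv.swap_apply_of_ne_of_ne (fun hh => hvw hh.symm) (fun hh => hv'w hh.symm),
            Equiv.swap_apply_right]
        have hiso := demoteIso σ v w
        rw [hev, hew] at hiso
        exact ⟨hiso⟩
      · by_cases hww' : w = w'
        · rcases hww'
          -- (v,w), (v',w) : swap v v'
          left
          have hdvv' : G.neighborSet v = G.neighborSet v' := by rw [hd, hd']
          have hiso := demoteIso (dupSwap hdvv') v w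
          have hev : (dupSwap hdvv') v = v' := by
            rw [dupSwap_apply]; exact Equiv.swap_apply_left v v'
          have hew : (dupSwap hdvv') w = w := by
            rw [dupSwap_apply]
            exact Equiv.swap_apply_of_ne_of_ne (fun hh => hvw hh.symm)
              (fun hh => hwv' hh)
          rw [hev, hew] at hiso
          exact ⟨hiso⟩
        · -- all distinct : commute
          right
          have hv'v : v' ≠ v := fun hh => hvv' hh.symm
          have hv'w : v' ≠ w := fun hh => hwv' hh.symm
          have hw'v2 : w' ≠ v := hw'v
          have hw'w : w' ≠ w := fun hh => hww' hh.symm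
          refine ⟨demote (demote G v w) v' w', demote (demote G v' w') v w, ?_, ?_, ?_⟩
          · refine ⟨v', w', hv'w', ?_, rfl⟩
            rw [neighborSet_demote_other hv'v hv'w,
              neighborSet_demote_other hw'v2 hw'w, hd']
          · refine ⟨v, w, hvw, ?_, rfl⟩
            rw [neighborSet_demote_other hvv' (fun hh => hw'v hh.symm),
              neighborSet_demote_other (fun hh => hv'w hh.symm) (fun hh => hw'w hh.symm), hd]
          · rw [demote_demote_comm hvv' (fun hh => hw'v hh.symm) hwv']
            exact ⟨Iso.refl⟩

open SimpleGraph in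
lemma rstep_confluence_rev {G H₁ H₂ : SimpleGraph (Fin n)} (hconn : G.Connected)
    (hn4 : 4 ≤ n)
    (s1 : RStep H₁ G) (s2 : RStep H₂ G) :
    Nonempty (H₁ ≃g H₂) ∨
      ∃ K₁ K₂, RStep K₁ H₁ ∧ RStep K₂ H₂ ∧ Nonempty (K₁ ≃g K₂) := by
  obtain ⟨v, w, hv, rfl⟩ := rstep_pred_eq s1
  obtain ⟨v', w', hv', rfl⟩ := rstep_pred_eq s2
  have hvw : v ≠ w := ne_of_pendant hv
  have hv'w' : v' ≠ w' := ne_of_pendant hv'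
  have hAv := adj_iff_of_pendant hv
  have hAv' := adj_iff_of_pendant hv'
  by_cases hvv' : v = v'
  · subst hvv'
    have : w = w' := by
      have h1 : w ∈ G.neighborSet v := by rw [hv]; exact rfl
      rw [hv'] at h1
      exact h1
    subst this
    exact Or.inl ⟨Iso.refl⟩
  · by_cases hww' : w = w'
    · rcases hww'
      -- two pendants with the same support : v, v' are duplicates in G
      left
      have hdvv' : G.neighborSet v = G.neighborSet v' := by rw [hv, hv']
      have hiso := promoteIso (dupSwap hdvv') v w
      have hev : (dupSwap hdvv') v = v' := by
        rw [dupSwap_apply]; exact Equiv.swap_apply_left v v'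
      have hew : (dupSwap hdvv') w = w := by
        rw [dupSwap_apply]
        exact Equiv.swap_apply_of_ne_of_ne (fun hh => hvw hh.symm)
          (fun hh => hv'w' hh.symm)
      rw [hev, hew] at hiso
      exact ⟨hiso⟩
    · -- different supports
      have hv'w : v' ≠ w := by
        intro hh
        -- v' = w : then w' = v and {v, v'} is a closed 2-element set
        have h2 : G.Adj v' v := by
          rw [hh]
          exact ((hAv w).2 rfl).symm
        have hw'v : w' = v := ((hAv' v).1 h2).symm
        obtain ⟨b₀, hb₀⟩ : ∃ b₀, b₀ ∉ ({v, v'} : Set (Fin n)) := by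
          by_contra hcon
          push_neg at hcon
          have hu : (Set.univ : Set (Fin n)) ⊆ {v, v'} := fun u _ => hcon u
          have h2' : ({v, v'} : Set (Fin n)).ncard ≤ 2 := by
            apply le_trans (Set.ncard_insert_le _ _)
            simp
          have h3 := le_trans (Set.ncard_le_ncard hu (Set.toFinite _)) h2'
          rw [Set.ncard_univ, Nat.card_eq_fintype_card, Fintype.card_fin] at h3
          omega
        obtain ⟨a, ha, b, hb, hadj⟩ := exists_adj_outside hconn
          (S := {v, v'}) (a₀ := v) (b₀ := b₀) (by simp) hb₀
        simp only [Set.mem_insert_iff, Set.mem_singleton_iff] at ha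
        rcases ha with rfl | rfl
        · have hbw := (hAv b).1 hadj
          exact hb (by simp [hbw, ← hh])
        · have hbw' := (hAv' b).1 hadj
          exact hb (by simp [hbw', hw'v])
      have hvw' : v ≠ w' := by
        intro hh
        have h2 : G.Adj v' v := (hAv' v).2 hh
        have h3 := (hAv v').1 h2.symm
        exact hv'w h3
      -- common ancestor
      right
      have hv'v : v' ≠ v := fun hh => hvv' hh.symm
      have hpend1 : (promote G v w).neighborSet v' = {w'} := by
        rw [neighborSet_promote_other hv'v]
        have hnwv' : ¬ G.Adj w v' := by
          intro hadj
          exact hww' ((hAv' w).1 hadj.symm)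
        ext b
        simp only [Set.mem_union, Set.mem_diff, Set.mem_singleton_iff, Set.mem_setOf_eq, hv']
        constructor
        · rintro (⟨hb, _⟩ | ⟨_, hadj⟩)
          · exact hb
          · exact absurd hadj hnwv'
        · rintro rfl
          exact Or.inl ⟨rfl, fun hh => hvw' hh.symm⟩
      have hpend2 : (promote G v' w').neighborSet v = {w} := by
        rw [neighborSet_promote_other hvv']
        have hnw'v : ¬ G.Adj w' v := by
          intro hadj
          exact hww' ((hAv w').1 hadj.symm).symm
        ext b
        simp only [Set.mem_union, Set.mem_diff, Set.mem_singleton_iff, Set.mem_setOf_eq, hv]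
        constructor
        · rintro (⟨hb, _⟩ | ⟨_, hadj⟩)
          · exact hb
          · exact absurd hadj hnw'v
        · rintro rfl
          exact Or.inl ⟨rfl, fun hh => hv'w hh.symm⟩
      refine ⟨promote (promote G v w) v' w', promote (promote G v' w') v w,
        rstep_promote hpend1, rstep_promote hpend2, ?_⟩
      rw [promote_promote_comm hAv hAv' hvv' hww' hvw' hv'w hvw hv'w']
      exact ⟨Iso.refl⟩

-- abstract rewriting
section Abstract

open Relation

variable {α : Type} (R : α → α → Prop)

/-- diamond property up to identity. -/
def Dia : Prop := ∀ a b c, R a b → R a c → b = c ∨ ∃ d, R b d ∧ R c d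

variable {R}

lemma dia_confluent (h : Dia R) {a b c : α}
    (hab : ReflTransGen R a b) (hac : ReflTransGen R a c) :
    ∃ d, ReflTransGen R b d ∧ ReflTransGen R c d := by
  have hcr := Relation.church_rosser (r := R) (fun a b c hab hac => by
    rcases h a b c hab hac with rfl | ⟨d, hbd, hcd⟩
    · exact ⟨b, ReflGen.refl, ReflTransGen.refl⟩
    · exact ⟨d, ReflGen.single hbd, ReflTransGen.single hcd⟩) hab hac
  exact hcr

/-- normal form: no step out of `a`. -/
def IsNF (R : α → α → Prop) (a : α) : Prop := ∀ b, ¬ R a b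

lemma nf_rtg {a b : α} (h : IsNF R a) (hr : ReflTransGen R a b) : b = a := by
  rcases hr.cases_head with rfl | ⟨c, hc, _⟩
  · rfl
  · exact absurd hc (h c)

lemma exists_nf (hwf : WellFounded (flip R)) (a : α) :
    ∃ b, ReflTransGen R a b ∧ IsNF R b := by
  induction a using hwf.induction with
  | _ a ih =>
    by_cases hnf : IsNF R a
    · exact ⟨a, ReflTransGen.refl, hnf⟩
    · simp only [IsNF, not_forall, not_not] at hnf
      obtain ⟨b, hb⟩ := hnf
      obtain ⟨c, hc1, hc2⟩ := ih b hb
      exact ⟨c, ReflTransGen.head hb hc1, hc2⟩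

lemma nf_unique (hdia : Dia R) {a b c : α}
    (hab : ReflTransGen R a b) (hac : ReflTransGen R a c)
    (hb : IsNF R b) (hc : IsNF R c) : b = c := by
  obtain ⟨d, hbd, hcd⟩ := dia_confluent hdia hab hac
  rw [← nf_rtg hb hbd, ← nf_rtg hc hcd]

lemma rtg_flip {a b : α} (h : ReflTransGen (flip R) a b) : ReflTransGen R b a := by
  induction h with
  | refl => exact ReflTransGen.refl
  | tail hstep hr ih => exact ReflTransGen.head hr ih

lemma rtg_unflip {a b : α} (h : ReflTransGen R a b) : ReflTransGen (flip R) b a := by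
  induction h with
  | refl => exact ReflTransGen.refl
  | tail hstep hr ih => exact ReflTransGen.head hr ih

noncomputable def nf_equiv (R : α → α → Prop)
    (hwf1 : WellFounded (flip R)) (hwf2 : WellFounded R)
    (hdia : Dia R) (hdia' : Dia (flip R)) :
    {a : α // IsNF R a} ≃ {a : α // IsNF (flip R) a} := by
  classical
  -- srcF : a maximal backwards chain from any element
  have hsrc : ∀ a : α, ∃ b, ReflTransGen (flip R) a b ∧ IsNF (flip R) b := by
    intro a
    exact exists_nf (by simpa [flip] using hwf2) a
  have hnf : ∀ a : α, ∃ b, ReflTransGen R a b ∧ IsNF R b := fun a => exists_nf hwf1 a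
  refine
    { toFun := fun a => ⟨Classical.choose (hsrc a.1), (Classical.choose_spec (hsrc a.1)).2⟩
      invFun := fun a => ⟨Classical.choose (hnf a.1), (Classical.choose_spec (hnf a.1)).2⟩
      left_inv := ?_
      right_inv := ?_ }
  · rintro ⟨a, ha⟩
    apply Subtype.ext
    simp only
    -- let s be the chosen source, we must show nfF s = a
    set s := Classical.choose (hsrc a) with hs
    obtain ⟨hs1, hs2⟩ := Classical.choose_spec (hsrc a)
    have hsa : ReflTransGen R s a := rtg_flip hs1
    obtain ⟨hn1, hn2⟩ := Classical.choose_spec (hnf s)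
    exact nf_unique hdia hn1 hsa hn2 ha
  · rintro ⟨a, ha⟩
    apply Subtype.ext
    simp only
    set s := Classical.choose (hnf a) with hs
    obtain ⟨hs1, hs2⟩ := Classical.choose_spec (hnf a)
    have hsa : ReflTransGen (flip R) s a := rtg_unflip hs1
    obtain ⟨hn1, hn2⟩ := Classical.choose_spec (hsrc s)
    exact nf_unique hdia' hn1 hsa hn2 ha

end Abstract

-- quotient level
section QuotLevel

variable {n : ℕ} (Φ : ∀ {V : Type}, SimpleGraph V → Prop)

/-- iso classes of `Φ`-graphs on `n` vertices. -/
def QT (n : ℕ) (Φ : ∀ {V : Type}, SimpleGraph V → Prop) : Type :=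
  Quotient (graphIsoSetoid (fun G : SimpleGraph (Fin n) => Φ G))

/-- quotient class of a `Φ`-graph. -/
def mkQ {n : ℕ} (Φ : ∀ {V : Type}, SimpleGraph V → Prop) (G : SimpleGraph (Fin n))
    (h : Φ G) : QT n Φ :=
  Quotient.mk (graphIsoSetoid (fun G : SimpleGraph (Fin n) => Φ G)) ⟨G, h⟩

lemma mkQ_eq {G H : SimpleGraph (Fin n)} (hG : Φ G) (hH : Φ H) (e : G ≃g H) :
    mkQ Φ G hG = mkQ Φ H hH :=
  Quotient.sound ⟨e⟩

lemma mkQ_exact {G H : SimpleGraph (Fin n)} {hG : Φ G} {hH : Φ H}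
    (h : mkQ Φ G hG = mkQ Φ H hH) : Nonempty (G ≃g H) :=
  Quotient.exact h

lemma QT_ind {motive : QT n Φ → Prop}
    (h : ∀ (G : SimpleGraph (Fin n)) (hG : Φ G), motive (mkQ Φ G hG)) :
    ∀ x, motive x := by
  intro x
  induction x using Quotient.ind with
  | _ a => exact h a.1 a.2

/-- the rewriting step on iso classes of `Φ`-graphs. -/
def StepQ (x y : QT n Φ) : Prop :=
  ∃ (G G' : SimpleGraph (Fin n)) (hG : Φ G) (hG' : Φ G'),
    x = mkQ Φ G hG ∧ y = mkQ Φ G' hG' ∧ RStep G G'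

/-- decreasing measure. -/
noncomputable def muQ : QT n Φ → ℕ :=
  Quotient.lift (fun G : {G : SimpleGraph (Fin n) // Φ G} => mu G.1)
    (fun _ _ hab => mu_iso hab.some)

/-- increasing measure. -/
noncomputable def nuQ : QT n Φ → ℕ :=
  Quotient.lift (fun G : {G : SimpleGraph (Fin n) // Φ G} => nu G.1)
    (fun _ _ hab => nu_iso hab.some)

/-- point-determining, on classes. -/
def pdQ : QT n Φ → Prop :=
  Quotient.lift (fun G : {G : SimpleGraph (Fin n) // Φ G} => pd G.1)
    (fun _ b hab => propext ⟨fun h => pd_iso hab.some h, fun h => pd_iso hab.some.symm h⟩)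

/-- no endpoints, on classes. -/
def efQ : QT n Φ → Prop :=
  Quotient.lift (fun G : {G : SimpleGraph (Fin n) // Φ G} => ef G.1)
    (fun _ b hab => propext ⟨fun h => ef_iso hab.some h, fun h => ef_iso hab.some.symm h⟩)

@[simp] lemma muQ_mk {G : SimpleGraph (Fin n)} (hG : Φ G) : muQ Φ (mkQ Φ G hG) = mu G := rfl
@[simp] lemma nuQ_mk {G : SimpleGraph (Fin n)} (hG : Φ G) : nuQ Φ (mkQ Φ G hG) = nu G := rfl
@[simp] lemma pdQ_mk {G : SimpleGraph (Fin n)} (hG : Φ G) : pdQ Φ (mkQ Φ G hG) = pd G := rfl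
@[simp] lemma efQ_mk {G : SimpleGraph (Fin n)} (hG : Φ G) : efQ Φ (mkQ Φ G hG) = ef G := rfl

section WithHyps

variable
  (hiso : ∀ {V W : Type} [Fintype V] [Fintype W]
    (G : SimpleGraph V) (H : SimpleGraph W), Nonempty (G ≃g H) → (Φ G ↔ Φ H))
  (hconn : ∀ {V : Type} [Fintype V] (G : SimpleGraph V), Φ G → G.Connected)
  (hend : ∀ {V : Type} [Fintype V] (G : SimpleGraph V) (v : V),
    (G.neighborSet v).ncard = 1 →
    (Φ G ↔ Φ (G.induce {u : V | u ≠ v})))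
  (hdup : ∀ {V : Type} [Fintype V] (G : SimpleGraph V) (v w : V),
    v ≠ w → 3 ≤ Fintype.card V → G.neighborSet v = G.neighborSet w →
    (Φ G ↔ Φ (G.induce {u : V | u ≠ v})))
  (hn4 : 4 ≤ n)

include hend hdup hn4 in
lemma phi_of_rstep {G G' : SimpleGraph (Fin n)} (h : RStep G G') (hG : Φ G) : Φ G' :=
  (phi_rstep_iff Φ hend hdup (by omega) h).1 hG

include hend hdup hn4 in
lemma phi_of_rstep_rev {G G' : SimpleGraph (Fin n)} (h : RStep G G') (hG' : Φ G') : Φ G :=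
  (phi_rstep_iff Φ hend hdup (by omega) h).2 hG'

include hconn hn4 in
lemma stepQ_measures {x y : QT n Φ} (h : StepQ Φ x y) :
    muQ Φ y < muQ Φ x ∧ nuQ Φ x < nuQ Φ y := by
  obtain ⟨G, G', hG, hG', rfl, rfl, hs⟩ := h
  simpa using mu_nu_step hs (hconn G hG) hn4

include hconn hn4 in
lemma wf_flip_stepQ : WellFounded (flip (StepQ (n := n) Φ)) := by
  apply Subrelation.wf (r := InvImage Nat.lt (muQ Φ))
  · intro x y hxy
    exact (stepQ_measures Φ hconn hn4 hxy).1
  · exact InvImage.wf _ Nat.lt_wfRel.wf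

include hconn hn4 in
lemma wf_stepQ : WellFounded (StepQ (n := n) Φ) := by
  apply Subrelation.wf (r := InvImage Nat.lt (nuQ Φ))
  · intro x y hxy
    exact (stepQ_measures Φ hconn hn4 hxy).2
  · exact InvImage.wf _ Nat.lt_wfRel.wf

include hiso hend hdup hn4 in
lemma diaQ : Dia (StepQ (n := n) Φ) := by
  rintro x y z ⟨G₁, G₁', h₁, h₁', hx1, hy, hs1⟩ ⟨G₂, G₂', h₂, h₂', hx2, hz, hs2⟩
  obtain ⟨e⟩ := mkQ_exact Φ (hx1.symm.trans hx2)
  obtain ⟨H', hs2', ⟨g⟩⟩ := rstep_transport e.symm hs2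
  have hH' : Φ H' := (hiso G₂' H' ⟨g⟩).1 h₂'
  have hzH : z = mkQ Φ H' hH' := by rw [hz]; exact mkQ_eq Φ h₂' hH' g
  rcases rstep_confluence hs1 hs2' with ⟨f⟩ | ⟨K₁, K₂, sk1, sk2, ⟨fk⟩⟩
  · left
    rw [hy, hzH]
    exact mkQ_eq Φ h₁' hH' f.some
  · right
    have hK₁ : Φ K₁ := phi_of_rstep Φ hend hdup hn4 sk1 h₁'
    have hK₂ : Φ K₂ := phi_of_rstep Φ hend hdup hn4 sk2 hH'
    refine ⟨mkQ Φ K₁ hK₁, ⟨G₁', K₁, h₁', hK₁, hy, rfl, sk1⟩,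
      ⟨H', K₂, hH', hK₂, hzH, ?_, sk2⟩⟩
    exact (mkQ_eq Φ hK₁ hK₂ fk)

-- transporting a predecessor along an isomorphism of the target
lemma rstep_transport_rev {G H G' : SimpleGraph (Fin n)} (e : G ≃g H) (h : RStep G' G) :
    ∃ H', RStep H' H ∧ Nonempty (G' ≃g H') := by
  obtain ⟨v, w, hv, rfl⟩ := rstep_pred_eq h
  refine ⟨promote H (e v) (e w), ?_, ⟨promoteIso e v w⟩⟩
  apply rstep_promote
  rw [iso_neighborSet e v, hv]
  simp

include hiso hconn hend hdup hn4 in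
lemma diaQ_rev : Dia (flip (StepQ (n := n) Φ)) := by
  rintro x y z ⟨H₁, G₁, hH₁, h₁, hy, hx1, hs1⟩ ⟨H₂, G₂, hH₂, h₂, hz, hx2, hs2⟩
  obtain ⟨e⟩ := mkQ_exact Φ (hx1.symm.trans hx2)
  obtain ⟨H₂', hs2', ⟨g⟩⟩ := rstep_transport_rev e.symm hs2
  have hH₂' : Φ H₂' := (hiso H₂ H₂' ⟨g⟩).1 hH₂
  have hzH : z = mkQ Φ H₂' hH₂' := by rw [hz]; exact mkQ_eq Φ hH₂ hH₂' g
  rcases rstep_confluence_rev (hconn G₁ h₁) hn4 hs1 hs2' with ⟨f⟩ | ⟨K₁, K₂, sk1, sk2, ⟨fk⟩⟩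
  · left
    rw [hy, hzH]
    exact mkQ_eq Φ hH₁ hH₂' f.some
  · right
    have hK₁ : Φ K₁ := phi_of_rstep_rev Φ hend hdup hn4 sk1 hH₁
    have hK₂ : Φ K₂ := phi_of_rstep_rev Φ hend hdup hn4 sk2 hH₂'
    refine ⟨mkQ Φ K₁ hK₁, ⟨K₁, H₁, hK₁, hH₁, rfl, hy, sk1⟩,
      ⟨K₂, H₂', hK₂, hH₂', ?_, hzH, sk2⟩⟩
    exact (mkQ_eq Φ hK₁ hK₂ fk)

include hiso hend hdup hn4 in
lemma isNF_iff_pdQ : ∀ x : QT n Φ, IsNF (StepQ (n := n) Φ) x ↔ pdQ Φ x := by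
  apply QT_ind
  intro G hG
  rw [pdQ_mk]
  constructor
  · intro hnf
    by_contra hpd
    unfold pd at hpd
    push_neg at hpd
    obtain ⟨u, v, hd, huv⟩ := hpd
    have hstep : RStep G (demote G u v) := ⟨u, v, huv, hd, rfl⟩
    exact hnf (mkQ Φ _ (phi_of_rstep Φ hend hdup hn4 hstep hG))
      ⟨G, _, hG, _, rfl, rfl, hstep⟩
  · intro hpd y hy
    obtain ⟨G₂, G₂', h₂, h₂', hx, _, hs⟩ := hy
    obtain ⟨e⟩ := mkQ_exact Φ hx
    obtain ⟨v, w, hvw, hd, _⟩ := hs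
    exact hvw (pd_iso e hpd v w hd)

include hiso hend hdup hn4 in
lemma isNF_flip_iff_efQ : ∀ x : QT n Φ, IsNF (flip (StepQ (n := n) Φ)) x ↔ efQ Φ x := by
  apply QT_ind
  intro G hG
  rw [efQ_mk]
  constructor
  · intro hnf
    by_contra hef
    unfold ef at hef
    push_neg at hef
    obtain ⟨v, hv1⟩ := hef
    obtain ⟨w, hw⟩ := Set.ncard_eq_one.1 hv1
    have hstep := rstep_promote hw
    have hΦ' : Φ (promote G v w) := phi_of_rstep_rev Φ hend hdup hn4 hstep hG
    exact hnf (mkQ Φ _ hΦ') ⟨promote G v w, G, hΦ', hG, rfl, rfl, hstep⟩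
  · intro hef y hy
    obtain ⟨H, G₂, hH, h₂, _, hx, hs⟩ := hy
    obtain ⟨e⟩ := mkQ_exact Φ hx
    obtain ⟨v, w, hv, _⟩ := rstep_pred_eq hs
    refine ef_iso e hef v ?_
    rw [hv]
    exact Set.ncard_singleton w

include hiso hconn hend hdup hn4 in
lemma pdQ_equiv_efQ :
    Nonempty ({x : QT n Φ // pdQ Φ x} ≃ {x : QT n Φ // efQ Φ x}) := by
  have e := nf_equiv (StepQ (n := n) Φ)
    (wf_flip_stepQ Φ hconn hn4) (wf_stepQ Φ hconn hn4)
    (diaQ Φ hiso hend hdup hn4) (diaQ_rev Φ hiso hconn hend hdup hn4)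
  exact ⟨((Equiv.subtypeEquivRight (isNF_iff_pdQ Φ hiso hend hdup hn4)).symm.trans e).trans
    (Equiv.subtypeEquivRight (isNF_flip_iff_efQ Φ hiso hend hdup hn4))⟩

end WithHyps

/-- iso classes of `Φ ∧ S`-graphs are the `S`-classes of `Φ`-graphs. -/
lemma subQuotEquiv (S : SimpleGraph (Fin n) → Prop)
    (SQ : QT n Φ → Prop) (hSQ : ∀ G hG, SQ (mkQ Φ G hG) ↔ S G) :
    Nonempty (Quotient (graphIsoSetoid (fun G : SimpleGraph (Fin n) => Φ G ∧ S G)) ≃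
      {x : QT n Φ // SQ x}) := by
  refine ⟨Equiv.ofBijective
    (Quotient.lift
      (fun G : {G : SimpleGraph (Fin n) // Φ G ∧ S G} =>
        (⟨mkQ Φ G.1 G.2.1, (hSQ _ _).2 G.2.2⟩ : {x : QT n Φ // SQ x}))
      ?_) ⟨?_, ?_⟩⟩
  · intro a b hab
    apply Subtype.ext
    exact mkQ_eq Φ _ _ hab.some
  · intro q1 q2
    induction q1 using Quotient.ind with
    | _ a =>
      induction q2 using Quotient.ind with
      | _ b =>
        intro hab
        simp only [Quotient.lift_mk, Subtype.mk.injEq] at hab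
        exact Quotient.sound (mkQ_exact Φ hab)
  · rintro ⟨x, hx⟩
    obtain ⟨a, ha⟩ := Quotient.exists_rep x
    have hs : S a.1 := by
      rw [← hSQ a.1 a.2]
      show SQ (Quotient.mk _ ⟨a.1, a.2⟩)
      rw [ha]
      exact hx
    refine ⟨Quotient.mk _ ⟨a.1, ⟨a.2, hs⟩⟩, ?_⟩
    apply Subtype.ext
    show mkQ Φ a.1 a.2 = x
    rw [← ha]
    rfl

end QuotLevel

-- small cases
lemma quotCongr {n : ℕ} {P Q : SimpleGraph (Fin n) → Prop} (h : ∀ G, P G ↔ Q G) :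
    Nonempty (Quotient (graphIsoSetoid P) ≃ Quotient (graphIsoSetoid Q)) :=
  ⟨Quotient.congr (Equiv.subtypeEquivRight h) (fun _ _ => Iff.rfl)⟩

lemma pd_one (G : SimpleGraph (Fin 1)) : pd G :=
  fun u v _ => Subsingleton.elim u v

lemma ef_one (G : SimpleGraph (Fin 1)) : ef G := by
  intro v
  have h : G.neighborSet v = ∅ := by
    ext b
    simp only [mem_neighborSet, Set.mem_empty_iff_false, iff_false]
    rw [Subsingleton.elim b v]
    exact G.loopless.irrefl v
  rw [h]
  simp

lemma pd_iff_ef_three (G : SimpleGraph (Fin 3)) (hc : G.Connected) : pd G ↔ ef G := by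
  constructor
  · intro hpd v hv1
    obtain ⟨x, hx⟩ := Set.ncard_eq_one.1 hv1
    have hvx : G.Adj v x := by
      have : x ∈ G.neighborSet v := by rw [hx]; exact rfl
      exact this
    have hxv : x ≠ v := fun h => G.loopless.irrefl v (h ▸ hvx)
    -- get the third vertex y
    obtain ⟨y, hy⟩ : ∃ y : Fin 3, y ∉ ({v, x} : Set (Fin 3)) := by
      by_contra hcon
      push_neg at hcon
      have hu : (Set.univ : Set (Fin 3)) ⊆ {v, x} := fun u _ => hcon u
      have h2 : ({v, x} : Set (Fin 3)).ncard ≤ 2 := by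
        apply le_trans (Set.ncard_insert_le _ _)
        simp
      have h3 := le_trans (Set.ncard_le_ncard hu (Set.toFinite _)) h2
      rw [Set.ncard_univ, Nat.card_eq_fintype_card, Fintype.card_fin] at h3
      omega
    simp only [Set.mem_insert_iff, Set.mem_singleton_iff, not_or] at hy
    obtain ⟨hyv, hyx⟩ := hy
    -- N(y) is nonempty and contained in {x}
    have hssub : G.neighborSet y ⊆ {x} := by
      intro z hz
      have hzy : z ≠ y := fun h => G.loopless.irrefl y (h ▸ (hz : G.Adj y z))
      by_cases hzv : z = v
      · subst hzv
        exfalso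
        have : y ∈ G.neighborSet z := (hz : G.Adj y z).symm
        rw [hx] at this
        exact hyx this
      · by_cases hzx : z = x
        · exact hzx
        · exfalso
          -- z is a fourth vertex, impossible in Fin 3
          have hsub4 : ({z, v, x, y} : Finset (Fin 3)) ⊆ Finset.univ :=
            Finset.subset_univ _
          have c1 : ({x, y} : Finset (Fin 3)).card = 2 := by
            rw [Finset.card_insert_of_notMem (by
              simp only [Finset.mem_singleton]
              exact fun h => hyx h.symm), Finset.card_singleton]
          have c2 : ({v, x, y} : Finset (Fin 3)).card = 3 := by
            rw [Finset.card_insert_of_notMem, c1]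
            simp only [Finset.mem_insert, Finset.mem_singleton, not_or]
            exact ⟨fun h => hxv (Eq.symm h), fun h => hyv (Eq.symm h)⟩
          have hcard : ({z, v, x, y} : Finset (Fin 3)).card = 4 := by
            rw [Finset.card_insert_of_notMem, c2]
            simp only [Finset.mem_insert, Finset.mem_singleton, not_or]
            exact ⟨hzv, hzx, hzy⟩
          have hle := Finset.card_le_card hsub4
          rw [hcard, Finset.card_univ, Fintype.card_fin] at hle
          omega
    have hne : (G.neighborSet y).Nonempty := neighbor_nonempty hc (fun h => hyv (Eq.symm h))
    have hNy : G.neighborSet y = {x} := by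
      rcases Set.subset_singleton_iff_eq.1 hssub with h | h
      · exact absurd h hne.ne_empty
      · exact h
    have : y = v := hpd y v (by rw [hNy, hx])
    exact hyv this
  · intro hef u v huv
    by_contra huv'
    have hvu : v ∉ G.neighborSet u := by
      intro hmem
      have : v ∈ G.neighborSet v := by rw [← huv]; exact hmem
      exact G.loopless.irrefl v this
    have huu : u ∉ G.neighborSet u := G.loopless.irrefl u
    have hsub : G.neighborSet u ⊆ Set.univ \ {u, v} := by
      intro z hz
      refine ⟨trivial, ?_⟩
      simp only [Set.mem_insert_iff, Set.mem_singleton_iff, not_or]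
      exact ⟨fun h => huu (h ▸ hz), fun h => hvu (h ▸ hz)⟩
    have h1 : (Set.univ \ {u, v} : Set (Fin 3)).ncard = 1 := by
      rw [Set.ncard_diff (Set.subset_univ _), Set.ncard_univ, Nat.card_eq_fintype_card,
        Fintype.card_fin, Set.ncard_pair huv']
    have h2 : (G.neighborSet u).ncard ≤ 1 := by
      rw [← h1]
      exact Set.ncard_le_ncard hsub (Set.toFinite _)
    have h3 : (G.neighborSet u).Nonempty := neighbor_nonempty hc (Ne.symm huv')
    have h4 : 1 ≤ (G.neighborSet u).ncard :=
      Nat.succ_le_iff.2 ((Set.ncard_pos (Set.toFinite _)).2 h3)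
    exact hef u (by omega)

lemma connected_empty_absurd (G : SimpleGraph (Fin 0)) (hc : G.Connected) : False := by
  obtain ⟨v⟩ := hc.nonempty
  exact v.elim0

end PDEF

/-- Let `Φ` be an isomorphism-invariant class of finite simple graphs such
that every graph of `Φ` is connected, the one-vertex graph is in `Φ`, `Φ` is
closed under creating and deleting endpoints, and the graphs of `Φ` on at
least two vertices are closed under creating and deleting duplicate vertices.
Then for every `n ≠ 2`, the number of isomorphism classes of point-determining
`Φ`-graphs on `n` vertices equals the number of isomorphism classes of
`Φ`-graphs on `n` vertices without endpoints (no vertex of degree 1). -/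
theorem card_pointDetermining_eq_card_noEndpoints
    (Φ : ∀ {V : Type}, SimpleGraph V → Prop)
    (hiso : ∀ {V W : Type} [Fintype V] [Fintype W]
      (G : SimpleGraph V) (H : SimpleGraph W), Nonempty (G ≃g H) → (Φ G ↔ Φ H))
    (hconn : ∀ {V : Type} [Fintype V] (G : SimpleGraph V), Φ G → G.Connected)
    (hone : Φ (⊥ : SimpleGraph (Fin 1)))
    (hend : ∀ {V : Type} [Fintype V] (G : SimpleGraph V) (v : V),
      (G.neighborSet v).ncard = 1 →
      (Φ G ↔ Φ (G.induce {u : V | u ≠ v})))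
    (hdup : ∀ {V : Type} [Fintype V] (G : SimpleGraph V) (v w : V),
      v ≠ w → 3 ≤ Fintype.card V → G.neighborSet v = G.neighborSet w →
      (Φ G ↔ Φ (G.induce {u : V | u ≠ v})))
    (n : ℕ) (hn : n ≠ 2) :
    Nat.card (Quotient (graphIsoSetoid (fun G : SimpleGraph (Fin n) =>
        Φ G ∧ ∀ u v : Fin n, G.neighborSet u = G.neighborSet v → u = v))) =
      Nat.card (Quotient (graphIsoSetoid (fun G : SimpleGraph (Fin n) =>
        Φ G ∧ ∀ v : Fin n, (G.neighborSet v).ncard ≠ 1))) := by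
  rcases Nat.lt_or_ge n 4 with h4 | h4
  · -- small cases n = 0, 1, 3
    have hiff : ∀ G : SimpleGraph (Fin n),
        (Φ G ∧ ∀ u v : Fin n, G.neighborSet u = G.neighborSet v → u = v) ↔
        (Φ G ∧ ∀ v : Fin n, (G.neighborSet v).ncard ≠ 1) := by
      intro G
      have key : G.Connected → ((∀ u v : Fin n, G.neighborSet u = G.neighborSet v → u = v) ↔
          (∀ v : Fin n, (G.neighborSet v).ncard ≠ 1)) := by
        intro hc
        interval_cases n
        · exact absurd (PDEF.connected_empty_absurd G hc) (fun h => h)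
        · exact ⟨fun _ => PDEF.ef_one G, fun _ => PDEF.pd_one G⟩
        · exact absurd rfl hn
        · exact PDEF.pd_iff_ef_three G hc
      constructor
      · rintro ⟨hΦ, hp⟩
        exact ⟨hΦ, (key (hconn G hΦ)).1 hp⟩
      · rintro ⟨hΦ, hp⟩
        exact ⟨hΦ, (key (hconn G hΦ)).2 hp⟩
    exact Nat.card_congr (PDEF.quotCongr hiff).some
  · -- main case
    have e1 := PDEF.subQuotEquiv (n := n) Φ PDEF.pd (PDEF.pdQ Φ) (fun G hG => Iff.of_eq (PDEF.pdQ_mk Φ hG))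
    have e2 := PDEF.pdQ_equiv_efQ Φ hiso hconn hend hdup h4
    have e3 := PDEF.subQuotEquiv (n := n) Φ PDEF.ef (PDEF.efQ Φ) (fun G hG => Iff.of_eq (PDEF.efQ_mk Φ hG))
    exact Nat.card_congr ((e1.some.trans e2.some).trans e3.some.symm)
end
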